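/- arXiv:math/0601535 — 3 statements merged into one kernel-verified Lean document; each statement's English description precedes it below -/
import Mathlib

section
/- Define ω(λ)² via the series ω(λ)² = −(Σ_{k≥0} (−1)^k sin^{2k+1}(α/2) (λ²−1)^{k+1/2}/(2k+1))², equivalently ω(λ) = (1/2) ln((1+i√(λ²−1)sin(α/2))/(1−i√(λ²−1)sin(α/2))). Then ω(λ)² is analytic in a neighborhood of λ = 1 and has the expansion ω(λ)² = −2u sin²(α/2)(1 + u/2 − (4/3) u sin²(α/2) + O(u²)) with u = λ − 1, where the O(u²) term is uniform for α in compact subsets of ℂ. -/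
open Complex

/-- The paper's `ω(λ)²`, defined via the series
`ω(λ) = i Σ_{k≥0} (−1)^k sin^{2k+1}(α/2) (λ²−1)^{k+1/2}/(2k+1)`, so that
`ω(λ)² = −(λ²−1)·(Σ_{k≥0} (−1)^k sin^{2k+1}(α/2) (λ²−1)^k/(2k+1))²`. -/
noncomputable def omegaSq (α z : ℂ) : ℂ :=
  -((z ^ 2 - 1) *
    (∑' k : ℕ, (-1 : ℂ) ^ k * Complex.sin (α / 2) ^ (2 * k + 1)
        * (z ^ 2 - 1) ^ k / (2 * k + 1)) ^ 2)


noncomputable def Gfun (t : ℂ) : ℂ := ∑' k : ℕ, (-1 : ℂ) ^ k * t ^ k / (2 * k + 1)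

lemma Gterm_norm_le (t : ℂ) (k : ℕ) : ‖(-1 : ℂ) ^ k * t ^ k / (2 * k + 1)‖ ≤ ‖t‖ ^ k := by
  have h1 : (2 * (k : ℂ) + 1) = ((2 * k + 1 : ℕ) : ℂ) := by push_cast; ring
  rw [h1, norm_div, norm_mul, norm_pow, norm_pow, norm_neg, norm_one, one_pow, one_mul,
    Complex.norm_natCast]
  apply div_le_self (pow_nonneg (norm_nonneg t) k)
  exact_mod_cast Nat.one_le_iff_ne_zero.2 (by omega)

lemma Gsummable {t : ℂ} (ht : ‖t‖ < 1) :
    Summable (fun k : ℕ => (-1 : ℂ) ^ k * t ^ k / (2 * k + 1)) := by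
  apply Summable.of_norm_bounded (summable_geometric_of_lt_one (norm_nonneg t) ht)
  exact Gterm_norm_le t

lemma sum_eq (s w : ℂ) :
    (∑' k : ℕ, (-1 : ℂ) ^ k * s ^ (2 * k + 1) * w ^ k / (2 * k + 1))
      = s * Gfun (s ^ 2 * w) := by
  rw [Gfun, ← tsum_mul_left]
  apply tsum_congr
  intro k
  rw [mul_pow, ← pow_mul, pow_succ]
  ring

lemma omegaSq_eq (α z : ℂ) :
    -((z ^ 2 - 1) *
      (∑' k : ℕ, (-1 : ℂ) ^ k * Complex.sin (α / 2) ^ (2 * k + 1)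
          * (z ^ 2 - 1) ^ k / (2 * k + 1)) ^ 2)
    = -((z ^ 2 - 1) * (Complex.sin (α / 2) * Gfun (Complex.sin (α / 2) ^ 2 * (z ^ 2 - 1))) ^ 2) := by
  rw [sum_eq]

lemma Gfun_bound {t : ℂ} (ht : ‖t‖ ≤ 1 / 2) : ‖Gfun t - (1 - t / 3)‖ ≤ 2 * ‖t‖ ^ 2 := by
  set f : ℕ → ℂ := fun k => (-1 : ℂ) ^ k * t ^ k / (2 * k + 1) with hf
  have hsum : Summable f := Gsummable (lt_of_le_of_lt ht (by norm_num))
  have hsum1 : Summable (fun k => f (k + 1)) := (summable_nat_add_iff 1).2 hsum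
  have hsum2 : Summable (fun k => f (k + 2)) := (summable_nat_add_iff 2).2 hsum
  have h0 : Gfun t = f 0 + (f 1 + ∑' k, f (k + 2)) := by
    rw [Gfun, ← hf]
    rw [Summable.tsum_eq_zero_add hsum, Summable.tsum_eq_zero_add hsum1]
  have hf0 : f 0 = 1 := by simp [hf]
  have hf1 : f 1 = -(t / 3) := by
    simp only [hf]
    norm_num
    ring
  have heq : Gfun t - (1 - t / 3) = ∑' k, f (k + 2) := by
    rw [h0, hf0, hf1]; ring
  rw [heq]
  have hbound : ∀ k : ℕ, ‖f (k + 2)‖ ≤ ‖t‖ ^ 2 * (1 / 2) ^ k := by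
    intro k
    calc ‖f (k + 2)‖ ≤ ‖t‖ ^ (k + 2) := Gterm_norm_le t (k + 2)
      _ = ‖t‖ ^ 2 * ‖t‖ ^ k := by ring
      _ ≤ ‖t‖ ^ 2 * (1 / 2) ^ k := by
          have := norm_nonneg t
          gcongr
  have hgeo : HasSum (fun k : ℕ => ‖t‖ ^ 2 * (1 / 2) ^ k) (‖t‖ ^ 2 * 2) := by
    have := hasSum_geometric_of_lt_one (by norm_num : (0:ℝ) ≤ 1/2) (by norm_num : (1:ℝ)/2 < 1)
    have h2 : ((1 : ℝ) - 1 / 2)⁻¹ = 2 := by norm_num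
    rw [h2] at this
    exact this.mul_left _
  have := tsum_of_norm_bounded hgeo hbound
  linarith

lemma Gfun_analyticAt : AnalyticAt ℂ Gfun 0 := by
  set c : ℕ → ℂ := fun k => (-1 : ℂ) ^ k / (2 * k + 1) with hc
  have hnorm : ∀ n, ‖c n‖ ≤ 1 := by
    intro n
    have h1 : (2 * (n : ℂ) + 1) = ((2 * n + 1 : ℕ) : ℂ) := by push_cast; ring
    simp only [hc]
    rw [h1, norm_div, norm_pow, norm_neg, norm_one, one_pow, Complex.norm_natCast]
    rw [div_le_one (by positivity)]
    exact_mod_cast Nat.one_le_iff_ne_zero.2 (by omega)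
  have hrad : (1 : ENNReal) ≤ (FormalMultilinearSeries.ofScalars ℂ c).radius := by
    apply FormalMultilinearSeries.le_radius_of_bound _ 1
    intro n
    rw [FormalMultilinearSeries.ofScalars_norm]
    simpa using hnorm n
  have h0 : (0 : ENNReal) < (FormalMultilinearSeries.ofScalars ℂ c).radius :=
    lt_of_lt_of_le zero_lt_one hrad
  have hball := (FormalMultilinearSeries.ofScalars ℂ c).hasFPowerSeriesOnBall h0
  have hGeq : Gfun = (FormalMultilinearSeries.ofScalars ℂ c).sum := by
    funext t
    rw [Gfun, show (FormalMultilinearSeries.ofScalars ℂ c).sum t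
        = FormalMultilinearSeries.ofScalarsSum c t from rfl,
      FormalMultilinearSeries.ofScalars_sum_eq]
    apply tsum_congr
    intro k
    simp only [hc, smul_eq_mul]
    ring
  rw [hGeq]
  exact hball.analyticAt
lemma omegaSq_eq' (α z : ℂ) :
    omegaSq α z
    = -((z ^ 2 - 1) * (Complex.sin (α / 2) * Gfun (Complex.sin (α / 2) ^ 2 * (z ^ 2 - 1))) ^ 2) := by
  rw [omegaSq, sum_eq]

set_option maxHeartbeats 1000000 in
/-- `ω(λ)²` is analytic in a neighborhood of `λ = 1` and has
the expansion `ω(λ)² = −2u sin²(α/2)(1 + u/2 − (4/3)u sin²(α/2) + O(u²))`,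
`u = λ − 1`, uniformly for `α` in compact subsets of `ℂ`. -/
theorem omegaSq_expansion (K : Set ℂ) (hK : IsCompact K) :
    ∃ C > (0 : ℝ), ∃ δ > (0 : ℝ), ∀ α ∈ K,
      AnalyticAt ℂ (omegaSq α) 1 ∧
      ∀ u : ℂ, ‖u‖ < δ →
        ‖omegaSq α (1 + u)
            - (-(2 * u * Complex.sin (α / 2) ^ 2)
                * (1 + u / 2 - (4 / 3) * u * Complex.sin (α / 2) ^ 2))‖
          ≤ C * ‖Complex.sin (α / 2) ^ 2‖ * ‖u‖ ^ 3 := by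
  obtain ⟨B, hB⟩ := hK.exists_bound_of_continuousOn
    ((Complex.continuous_sin.comp (continuous_id.div_const 2)).continuousOn)
  set B0 : ℝ := max B 1 with hB0def
  have hB0 : ∀ α ∈ K, ‖Complex.sin (α / 2)‖ ≤ B0 := fun α hα =>
    (hB α hα).trans (le_max_left _ _)
  have hB1 : (1 : ℝ) ≤ B0 := le_max_right _ _
  have hB0pos : (0 : ℝ) < B0 := lt_of_lt_of_le one_pos hB1
  refine ⟨100 * B0 ^ 4, by positivity, min (1 / 2) (1 / (5 * B0 ^ 2)), by positivity, ?_⟩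
  intro α hα
  set s := Complex.sin (α / 2) with hs
  have hsB : ‖s‖ ≤ B0 := hB0 α hα
  constructor
  · have key : omegaSq α = fun z => -((z ^ 2 - 1) * (s * Gfun (s ^ 2 * (z ^ 2 - 1))) ^ 2) := by
      funext z; rw [omegaSq_eq']
    rw [key]
    have hinner : AnalyticAt ℂ (fun z : ℂ => s ^ 2 * (z ^ 2 - 1)) 1 :=
      analyticAt_const.mul (((analyticAt_id).pow 2).sub analyticAt_const)
    have hg : AnalyticAt ℂ (fun z : ℂ => Gfun (s ^ 2 * (z ^ 2 - 1))) 1 := by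
      have h0 : AnalyticAt ℂ Gfun ((fun z : ℂ => s ^ 2 * (z ^ 2 - 1)) 1) := by
        simpa using Gfun_analyticAt
      have hcomp := AnalyticAt.comp (𝕜 := ℂ) (g := Gfun)
        (f := fun z : ℂ => s ^ 2 * (z ^ 2 - 1)) (x := 1) h0 hinner
      exact hcomp
    exact ((((analyticAt_id).pow 2).sub analyticAt_const).mul
      ((analyticAt_const.mul hg).pow 2)).neg
  · intro u hu
    have hu2 : ‖u‖ < 1 / 2 := hu.trans_le (min_le_left _ _)
    have hu5 : ‖u‖ ≤ 1 / (5 * B0 ^ 2) := (hu.trans_le (min_le_right _ _)).le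
    have hw : ‖(1 + u) ^ 2 - 1‖ ≤ 5 / 2 * ‖u‖ := by
      have h1 : (1 + u) ^ 2 - 1 = u * (2 + u) := by ring
      rw [h1, norm_mul]
      have h2 : ‖(2 : ℂ) + u‖ ≤ 5 / 2 := by
        refine (norm_add_le _ _).trans ?_
        simp only [Complex.norm_ofNat]
        linarith
      calc ‖u‖ * ‖(2 : ℂ) + u‖ ≤ ‖u‖ * (5 / 2) := by
            exact mul_le_mul_of_nonneg_left h2 (norm_nonneg u)
        _ = 5 / 2 * ‖u‖ := by ring
    have ht : ‖s ^ 2 * ((1 + u) ^ 2 - 1)‖ ≤ 1 / 2 := by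
      rw [norm_mul, norm_pow]
      calc ‖s‖ ^ 2 * ‖(1 + u) ^ 2 - 1‖ ≤ B0 ^ 2 * (5 / 2 * ‖u‖) := by
            gcongr
        _ ≤ B0 ^ 2 * (5 / 2 * (1 / (5 * B0 ^ 2))) := by gcongr
        _ = 1 / 2 := by field_simp
    have hR := Gfun_bound ht
    set g : ℂ := Gfun (s ^ 2 * ((1 + u) ^ 2 - 1)) with hgdef
    set t : ℂ := s ^ 2 * ((1 + u) ^ 2 - 1) with htdef
    have hE : ‖g ^ 2 - 1 + 2 / 3 * t‖ ≤ 6 * ‖t‖ ^ 2 := by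
      have hEid : g ^ 2 - 1 + 2 / 3 * t
          = t ^ 2 / 9 + 2 * (g - (1 - t / 3)) * (1 - t / 3) + (g - (1 - t / 3)) ^ 2 := by ring
      rw [hEid]
      have ha : ‖t ^ 2 / 9‖ = ‖t‖ ^ 2 / 9 := by
        rw [norm_div, norm_pow]; norm_num
      have hb : ‖(1 : ℂ) - t / 3‖ ≤ 7 / 6 := by
        refine (norm_sub_le _ _).trans ?_
        rw [norm_div]
        simp only [norm_one, Complex.norm_ofNat]
        linarith
      have ht2 : ‖t‖ ^ 2 ≤ 1 / 4 := by nlinarith [norm_nonneg t]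
      calc ‖t ^ 2 / 9 + 2 * (g - (1 - t / 3)) * (1 - t / 3) + (g - (1 - t / 3)) ^ 2‖
          ≤ ‖t ^ 2 / 9 + 2 * (g - (1 - t / 3)) * (1 - t / 3)‖ + ‖(g - (1 - t / 3)) ^ 2‖ :=
            norm_add_le _ _
        _ ≤ ‖t ^ 2 / 9‖ + ‖2 * (g - (1 - t / 3)) * (1 - t / 3)‖ + ‖(g - (1 - t / 3)) ^ 2‖ := by
            have := norm_add_le (t ^ 2 / 9) (2 * (g - (1 - t / 3)) * (1 - t / 3))
            linarith
        _ ≤ 6 * ‖t‖ ^ 2 := by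
            rw [ha, norm_pow]
            have h2 : ‖2 * (g - (1 - t / 3)) * (1 - t / 3)‖
                = 2 * ‖g - (1 - t / 3)‖ * ‖1 - t / 3‖ := by
              rw [norm_mul, norm_mul, Complex.norm_ofNat]
            rw [h2]
            have hRn : (0:ℝ) ≤ ‖g - (1 - t / 3)‖ := norm_nonneg _
            have hbn : (0:ℝ) ≤ ‖(1:ℂ) - t / 3‖ := norm_nonneg _
            nlinarith [norm_nonneg t, sq_nonneg (‖t‖)]
    have hid : omegaSq α (1 + u)
        - (-(2 * u * s ^ 2) * (1 + u / 2 - 4 / 3 * u * s ^ 2))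
        = -(s ^ 2 * ((1 + u) ^ 2 - 1) * (g ^ 2 - 1 + 2 / 3 * t))
          + 2 / 3 * s ^ 4 * (4 * u ^ 3 + u ^ 4) := by
      rw [omegaSq_eq', ← hs, ← hgdef, htdef]
      ring
    rw [hid]
    have hnormA : ‖-(s ^ 2 * ((1 + u) ^ 2 - 1) * (g ^ 2 - 1 + 2 / 3 * t))‖
        = ‖s‖ ^ 2 * ‖(1 + u) ^ 2 - 1‖ * ‖g ^ 2 - 1 + 2 / 3 * t‖ := by
      rw [norm_neg, norm_mul, norm_mul, norm_pow]
    have hnormB : ‖(2 : ℂ) / 3 * s ^ 4 * (4 * u ^ 3 + u ^ 4)‖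
        ≤ 2 / 3 * ‖s‖ ^ 4 * (4 * ‖u‖ ^ 3 + ‖u‖ ^ 4) := by
      rw [norm_mul, norm_mul, norm_pow]
      gcongr
      · rw [norm_div]
        simp only [Complex.norm_ofNat]
        norm_num
      · refine (norm_add_le _ _).trans ?_
        rw [norm_mul, norm_pow, norm_pow, Complex.norm_ofNat]
    have htn : ‖t‖ = ‖s‖ ^ 2 * ‖(1 + u) ^ 2 - 1‖ := by
      rw [htdef, norm_mul, norm_pow]
    refine (norm_add_le _ _).trans ?_
    rw [hnormA, norm_pow]
    have hns : (0:ℝ) ≤ ‖s‖ := norm_nonneg s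
    have hnu : (0:ℝ) ≤ ‖u‖ := norm_nonneg u
    have hnw : (0:ℝ) ≤ ‖(1 + u) ^ 2 - 1‖ := norm_nonneg _
    have h1 : ‖s‖ ^ 2 * ‖(1 + u) ^ 2 - 1‖ * ‖g ^ 2 - 1 + 2 / 3 * t‖
        ≤ 94 * B0 ^ 4 * (‖s‖ ^ 2 * ‖u‖ ^ 3) := by
      have hE' : ‖g ^ 2 - 1 + 2 / 3 * t‖ ≤ 6 * (‖s‖ ^ 2 * ‖(1 + u) ^ 2 - 1‖) ^ 2 := by
        rw [← htn]; exact hE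
      have hs4 : ‖s‖ ^ 4 ≤ B0 ^ 4 := by gcongr
      have hXnn : (0:ℝ) ≤ B0 ^ 4 * (‖s‖ ^ 2 * ‖u‖ ^ 3) := by positivity
      calc ‖s‖ ^ 2 * ‖(1 + u) ^ 2 - 1‖ * ‖g ^ 2 - 1 + 2 / 3 * t‖
          ≤ ‖s‖ ^ 2 * ‖(1 + u) ^ 2 - 1‖ * (6 * (‖s‖ ^ 2 * ‖(1 + u) ^ 2 - 1‖) ^ 2) := by
            exact mul_le_mul_of_nonneg_left hE' (by positivity)
        _ = 6 * (‖s‖ ^ 2 * ‖s‖ ^ 4) * ‖(1 + u) ^ 2 - 1‖ ^ 3 := by ring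
        _ ≤ 6 * (‖s‖ ^ 2 * B0 ^ 4) * (5 / 2 * ‖u‖) ^ 3 := by gcongr
        _ = 375 / 4 * B0 ^ 4 * (‖s‖ ^ 2 * ‖u‖ ^ 3) := by ring
        _ ≤ 94 * B0 ^ 4 * (‖s‖ ^ 2 * ‖u‖ ^ 3) := by nlinarith [hXnn]
    have h2 : 2 / 3 * ‖s‖ ^ 4 * (4 * ‖u‖ ^ 3 + ‖u‖ ^ 4)
        ≤ 3 * B0 ^ 4 * (‖s‖ ^ 2 * ‖u‖ ^ 3) := by
      have hu4 : ‖u‖ ^ 4 ≤ 1 / 2 * ‖u‖ ^ 3 := by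
        nlinarith [mul_le_mul_of_nonneg_right hu2.le (pow_nonneg hnu 3)]
      have hs2B : ‖s‖ ^ 2 ≤ B0 ^ 2 := by gcongr
      have hB24 : B0 ^ 2 ≤ B0 ^ 4 := by
        nlinarith [mul_le_mul_of_nonneg_right hB1 hB0pos.le, sq_nonneg (B0 - 1), sq_nonneg B0]
      have hs4' : ‖s‖ ^ 4 ≤ B0 ^ 4 * ‖s‖ ^ 2 := by
        nlinarith [mul_le_mul_of_nonneg_right hs2B (pow_nonneg hns 2),
          mul_le_mul_of_nonneg_right hB24 (pow_nonneg hns 2)]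
      calc 2 / 3 * ‖s‖ ^ 4 * (4 * ‖u‖ ^ 3 + ‖u‖ ^ 4)
          ≤ 2 / 3 * (B0 ^ 4 * ‖s‖ ^ 2) * (4 * ‖u‖ ^ 3 + 1 / 2 * ‖u‖ ^ 3) := by
            have hsum : 4 * ‖u‖ ^ 3 + ‖u‖ ^ 4 ≤ 4 * ‖u‖ ^ 3 + 1 / 2 * ‖u‖ ^ 3 := by linarith
            have h4 : (0:ℝ) ≤ 4 * ‖u‖ ^ 3 + ‖u‖ ^ 4 := by positivity
            nlinarith [mul_nonneg (pow_nonneg hB0pos.le 4) (pow_nonneg hns 2)]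
        _ = 3 * B0 ^ 4 * (‖s‖ ^ 2 * ‖u‖ ^ 3) := by ring
    calc ‖s‖ ^ 2 * ‖(1 + u) ^ 2 - 1‖ * ‖g ^ 2 - 1 + 2 / 3 * t‖
          + ‖(2 : ℂ) / 3 * s ^ 4 * (4 * u ^ 3 + u ^ 4)‖
        ≤ 94 * B0 ^ 4 * (‖s‖ ^ 2 * ‖u‖ ^ 3) + 3 * B0 ^ 4 * (‖s‖ ^ 2 * ‖u‖ ^ 3) := by
          have := hnormB.trans h2
          linarith
      _ ≤ 100 * B0 ^ 4 * ‖s‖ ^ 2 * ‖u‖ ^ 3 := by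
          have hXnn : (0:ℝ) ≤ B0 ^ 4 * (‖s‖ ^ 2 * ‖u‖ ^ 3) := by positivity
          nlinarith [hXnn]
end

section
/- As n → ∞, Σ_{k=1}^{n} k ln k = (n²/2 + n/2 + 1/12) ln n − n²/4 + 1/12 − ζ'(−1) + o(1), where ζ is the Riemann zeta function. -/
open Complex Filter Set Topology intervalIntegral

noncomputable section

def emf (N : ℕ) (s : ℂ) : ℂ :=
  (∑ n ∈ Finset.Icc 1 N, (n : ℂ) ^ (-s)) + (N : ℂ) ^ (1 - s) / (s - 1)
    - (N : ℂ) ^ (-s) / 2 + s * (N : ℂ) ^ (-s - 1) / 12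

def pG (t : ℝ) : ℝ := -(t ^ 3 / 6) + t ^ 2 / 4 - t / 12
def pg (t : ℝ) : ℝ := -(t ^ 2 / 2) + t / 2 - 1 / 12
def pq (t : ℝ) : ℝ := -t + 1 / 2

lemma hasDerivAt_cpow_real {x : ℝ} (hx : 0 < x) (γ : ℂ) :
    HasDerivAt (fun y : ℝ => (y : ℂ) ^ γ) (γ * (x : ℂ) ^ (γ - 1)) x := by
  have h1 : ((x : ℂ)) ∈ slitPlane := by
    rw [Complex.mem_slitPlane_iff]; left; simpa using hx
  have h := ((hasDerivAt_id (x : ℂ)).cpow_const (c := γ) h1).comp_ofReal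
  simpa using h

lemma hasDerivAt_pG (N x : ℝ) :
    HasDerivAt (fun x : ℝ => pG (x - N)) (pg (x - N)) x := by
  have hid : HasDerivAt (fun x : ℝ => x - N) 1 x := (hasDerivAt_id x).sub_const N
  have h := (((hid.pow 3).div_const 6).neg.add ((hid.pow 2).div_const 4)).sub
    (hid.div_const 12)
  unfold pG pg
  refine h.congr_deriv ?_
  norm_num; ring

lemma hasDerivAt_pg (N x : ℝ) :
    HasDerivAt (fun x : ℝ => pg (x - N)) (pq (x - N)) x := by
  have hid : HasDerivAt (fun x : ℝ => x - N) 1 x := (hasDerivAt_id x).sub_const N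
  have h := (((hid.pow 2).div_const 2).neg.add (hid.div_const 2)).sub
    (hasDerivAt_const x (1/12 : ℝ))
  unfold pg pq
  refine h.congr_deriv ?_
  norm_num

lemma hasDerivAt_pq (N x : ℝ) :
    HasDerivAt (fun x : ℝ => pq (x - N)) (-1) x := by
  have hid : HasDerivAt (fun x : ℝ => x - N) 1 x := (hasDerivAt_id x).sub_const N
  have h := hid.neg.add_const (1/2 : ℝ)
  unfold pq
  exact h

lemma hasDerivAt_Phi {s : ℂ} (hs : s ≠ 1) (N : ℝ) {x : ℝ} (hx : 0 < x) :
    HasDerivAt (fun x : ℝ =>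
      (pG (x - N) : ℂ) * (s * (s + 1) * (x : ℂ) ^ (-s - 2))
        - (pg (x - N) : ℂ) * (-s * (x : ℂ) ^ (-s - 1))
        + (pq (x - N) : ℂ) * (x : ℂ) ^ (-s)
        + (x : ℂ) ^ (1 - s) / (1 - s))
      ((pG (x - N) : ℂ) * (-(s * (s + 1) * (s + 2)) * (x : ℂ) ^ (-s - 3))) x := by
  have hG := (hasDerivAt_pG N x).ofReal_comp
  have hg := (hasDerivAt_pg N x).ofReal_comp
  have hq := (hasDerivAt_pq N x).ofReal_comp
  have c2 := (hasDerivAt_cpow_real hx (-s - 2)).const_mul (s * (s + 1))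
  have c1 := (hasDerivAt_cpow_real hx (-s - 1)).const_mul (-s)
  have c0 := hasDerivAt_cpow_real hx (-s)
  have c3 := (hasDerivAt_cpow_real hx (1 - s)).div_const (1 - s)
  have h := (((hG.mul c2).sub (hg.mul c1)).add (hq.mul c0)).add c3
  refine h.congr_deriv ?_
  have h1s : (1 - s) ≠ 0 := sub_ne_zero.mpr (Ne.symm hs)
  have e1 : (x:ℂ) ^ (-s - 2 - 1) = (x:ℂ) ^ (-s - 3) := by ring_nf
  have e2 : (x:ℂ) ^ (-s - 1 - 1) = (x:ℂ) ^ (-s - 2) := by ring_nf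
  have e3 : (x:ℂ) ^ (-s - 1) = (x:ℂ) ^ (-s - 1) := rfl
  have e4 : (x:ℂ) ^ (1 - s - 1) = (x:ℂ) ^ (-s) := by ring_nf
  rw [e1, e2, e4]
  field_simp
  push_cast
  ring

lemma continuousOn_integrand {N : ℕ} (hN : 1 ≤ N) (c : ℂ) (γ : ℂ) :
    ContinuousOn (fun x : ℝ => (pG (x - N) : ℂ) * (c * (x : ℂ) ^ γ))
      (uIcc (N : ℝ) ((N : ℝ) + 1)) := by
  intro x hx
  have hx0 : 0 < x := by
    rcases hx with ⟨h1, h2⟩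
    have : (N : ℝ) ≤ x := by
      rcases le_total (N : ℝ) ((N : ℝ) + 1) with h | h
      · simpa [inf_eq_left.mpr h] using h1
      · linarith
    have : (1 : ℝ) ≤ (N : ℝ) := by exact_mod_cast hN
    linarith
  apply ContinuousAt.continuousWithinAt
  have h1 : ContinuousAt (fun x : ℝ => (pG (x - N) : ℂ)) x := by
    apply Complex.continuous_ofReal.continuousAt.comp
    unfold pG; fun_prop
  exact h1.mul (((hasDerivAt_cpow_real hx0 γ).continuousAt).const_mul c)

lemma emf_step {s : ℂ} (hs : s ≠ 1) {N : ℕ} (hN : 1 ≤ N) :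
    emf (N + 1) s - emf N s
      = s * (s + 1) * (s + 2) *
        ∫ x in (N : ℝ)..((N : ℝ) + 1), (pG (x - (N : ℝ)) : ℂ) * (x : ℂ) ^ (-s - 3) := by
  have hN1 : (1 : ℝ) ≤ (N : ℝ) := by exact_mod_cast hN
  have key : (∫ x in (N : ℝ)..((N : ℝ) + 1),
        (pG (x - (N : ℝ)) : ℂ) * (-(s * (s + 1) * (s + 2)) * (x : ℂ) ^ (-s - 3)))
      = (fun x : ℝ =>
          (pG (x - (N : ℝ)) : ℂ) * (s * (s + 1) * (x : ℂ) ^ (-s - 2))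
            - (pg (x - (N : ℝ)) : ℂ) * (-s * (x : ℂ) ^ (-s - 1))
            + (pq (x - (N : ℝ)) : ℂ) * (x : ℂ) ^ (-s)
            + (x : ℂ) ^ (1 - s) / (1 - s)) ((N : ℝ) + 1)
        - (fun x : ℝ =>
          (pG (x - (N : ℝ)) : ℂ) * (s * (s + 1) * (x : ℂ) ^ (-s - 2))
            - (pg (x - (N : ℝ)) : ℂ) * (-s * (x : ℂ) ^ (-s - 1))
            + (pq (x - (N : ℝ)) : ℂ) * (x : ℂ) ^ (-s)
            + (x : ℂ) ^ (1 - s) / (1 - s)) (N : ℝ) := by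
    refine integral_eq_sub_of_hasDerivAt (f := fun x : ℝ =>
          (pG (x - (N : ℝ)) : ℂ) * (s * (s + 1) * (x : ℂ) ^ (-s - 2))
            - (pg (x - (N : ℝ)) : ℂ) * (-s * (x : ℂ) ^ (-s - 1))
            + (pq (x - (N : ℝ)) : ℂ) * (x : ℂ) ^ (-s)
            + (x : ℂ) ^ (1 - s) / (1 - s)) (fun x hx => ?_) ?_
    · have hx0 : 0 < x := by
        rcases hx with ⟨h1, h2⟩
        have hle : (N : ℝ) ⊓ ((N : ℝ) + 1) = (N : ℝ) := inf_eq_left.mpr (by linarith)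
        rw [hle] at h1
        linarith
      exact hasDerivAt_Phi hs (N : ℝ) hx0
    · exact (continuousOn_integrand hN _ _).intervalIntegrable
  have pull : (∫ x in (N : ℝ)..((N : ℝ) + 1),
        (pG (x - (N : ℝ)) : ℂ) * (-(s * (s + 1) * (s + 2)) * (x : ℂ) ^ (-s - 3)))
      = -(s * (s + 1) * (s + 2)) *
        ∫ x in (N : ℝ)..((N : ℝ) + 1), (pG (x - (N : ℝ)) : ℂ) * (x : ℂ) ^ (-s - 3) := by
    rw [← integral_const_mul]
    apply integral_congr
    intro x _
    ring
  rw [pull] at key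
  have hI : s * (s + 1) * (s + 2) *
        (∫ x in (N : ℝ)..((N : ℝ) + 1), (pG (x - (N : ℝ)) : ℂ) * (x : ℂ) ^ (-s - 3))
      = -((fun x : ℝ =>
          (pG (x - (N : ℝ)) : ℂ) * (s * (s + 1) * (x : ℂ) ^ (-s - 2))
            - (pg (x - (N : ℝ)) : ℂ) * (-s * (x : ℂ) ^ (-s - 1))
            + (pq (x - (N : ℝ)) : ℂ) * (x : ℂ) ^ (-s)
            + (x : ℂ) ^ (1 - s) / (1 - s)) ((N : ℝ) + 1)
        - (fun x : ℝ =>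
          (pG (x - (N : ℝ)) : ℂ) * (s * (s + 1) * (x : ℂ) ^ (-s - 2))
            - (pg (x - (N : ℝ)) : ℂ) * (-s * (x : ℂ) ^ (-s - 1))
            + (pq (x - (N : ℝ)) : ℂ) * (x : ℂ) ^ (-s)
            + (x : ℂ) ^ (1 - s) / (1 - s)) (N : ℝ)) := by
    rw [← key]; ring
  rw [hI]
  simp only []
  have hv1 : ((N : ℝ) + 1) - (N : ℝ) = 1 := by ring
  have hv0 : ((N : ℝ)) - (N : ℝ) = 0 := by ring
  rw [hv1, hv0]
  have epG1 : pG 1 = 0 := by unfold pG; norm_num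
  have epG0 : pG 0 = 0 := by unfold pG; norm_num
  have epg1 : pg 1 = -(1/12) := by unfold pg; norm_num
  have epg0 : pg 0 = -(1/12) := by unfold pg; norm_num
  have epq1 : pq 1 = -(1/2) := by unfold pq; norm_num
  have epq0 : pq 0 = 1/2 := by unfold pq; norm_num
  rw [epG1, epG0, epg1, epg0, epq1, epq0]
  unfold emf
  have hsum : (∑ n ∈ Finset.Icc 1 (N + 1), (n : ℂ) ^ (-s))
      = (∑ n ∈ Finset.Icc 1 N, (n : ℂ) ^ (-s)) + ((N + 1 : ℕ) : ℂ) ^ (-s) := by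
    rw [Finset.sum_Icc_succ_top (by omega)]
  rw [hsum]
  have hcast : (((N : ℕ) + 1 : ℕ) : ℂ) = (((N : ℝ) + 1 : ℝ) : ℂ) := by push_cast; ring
  have hcast2 : (((N : ℕ)) : ℂ) = (((N : ℝ)) : ℂ) := by push_cast; ring
  rw [hcast, hcast2]
  have h1s : (1 : ℂ) - s ≠ 0 := sub_ne_zero.mpr (Ne.symm hs)
  have hs1 : s - (1 : ℂ) ≠ 0 := sub_ne_zero.mpr hs
  push_cast
  field_simp
  ring

lemma pG_bound {t : ℝ} (h0 : 0 ≤ t) (h1 : t ≤ 1) : |pG t| ≤ 1 := by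
  unfold pG
  rw [abs_le]
  constructor <;> nlinarith [pow_le_one₀ h0 h1 (n := 3), pow_le_one₀ h0 h1 (n := 2),
    pow_nonneg h0 3, pow_nonneg h0 2]

lemma emf_step_bound {s : ℂ} (hs : s ≠ 1) (h2 : -2 ≤ s.re) {R : ℝ} (hR : ‖s‖ ≤ R)
    {N : ℕ} (hN : 1 ≤ N) :
    ‖emf (N + 1) s - emf N s‖ ≤ (R + 2) ^ 3 * (N : ℝ) ^ (-s.re - 3) := by
  have hR0 : 0 ≤ R := le_trans (norm_nonneg s) hR
  have hN1 : (1 : ℝ) ≤ (N : ℝ) := by exact_mod_cast hN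
  rw [emf_step hs hN]
  have hbound : ∀ x ∈ Set.uIoc (N : ℝ) ((N : ℝ) + 1),
      ‖(pG (x - (N : ℝ)) : ℂ) * (x : ℂ) ^ (-s - 3)‖ ≤ (N : ℝ) ^ (-s.re - 3) := by
    intro x hx
    rw [Set.uIoc_of_le (by linarith)] at hx
    have hxN : (N : ℝ) < x := hx.1
    have hx1 : x ≤ (N : ℝ) + 1 := hx.2
    have hx0 : 0 < x := by linarith
    rw [norm_mul]
    have h1 : ‖((pG (x - (N : ℝ)) : ℝ) : ℂ)‖ ≤ 1 := by
      rw [Complex.norm_real, Real.norm_eq_abs]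
      exact pG_bound (by linarith) (by linarith)
    have h2' : ‖(x : ℂ) ^ (-s - 3)‖ ≤ (N : ℝ) ^ (-s.re - 3) := by
      rw [norm_cpow_eq_rpow_re_of_pos hx0]
      have : (-s - 3).re = -s.re - 3 := by simp
      rw [this]
      exact Real.rpow_le_rpow_of_nonpos (by linarith) hxN.le (by linarith)
    calc ‖((pG (x - (N : ℝ)) : ℝ) : ℂ)‖ * ‖(x : ℂ) ^ (-s - 3)‖
        ≤ 1 * ((N : ℝ) ^ (-s.re - 3)) := by
          apply mul_le_mul h1 h2' (norm_nonneg _) (by norm_num)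
      _ = (N : ℝ) ^ (-s.re - 3) := one_mul _
  have hint := intervalIntegral.norm_integral_le_of_norm_le_const hbound
  rw [show ((N : ℝ) + 1) - (N : ℝ) = 1 by ring, abs_one, mul_one] at hint
  rw [norm_mul]
  have hs3 : ‖s * (s + 1) * (s + 2)‖ ≤ (R + 2) ^ 3 := by
    rw [norm_mul, norm_mul]
    have e1 : ‖s‖ ≤ R + 2 := by linarith
    have e2 : ‖s + 1‖ ≤ R + 2 := by
      calc ‖s + 1‖ ≤ ‖s‖ + ‖(1 : ℂ)‖ := norm_add_le _ _
        _ ≤ R + 2 := by rw [norm_one]; linarith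
    have e3 : ‖s + 2‖ ≤ R + 2 := by
      calc ‖s + 2‖ ≤ ‖s‖ + ‖(2 : ℂ)‖ := norm_add_le _ _
        _ ≤ R + 2 := by
          have : ‖(2 : ℂ)‖ = 2 := by norm_num
          rw [this]; linarith
    calc ‖s‖ * ‖s + 1‖ * ‖s + 2‖ ≤ (R + 2) * (R + 2) * (R + 2) := by
          apply mul_le_mul (mul_le_mul e1 e2 (norm_nonneg _) (by linarith)) e3 (norm_nonneg _)
          positivity
      _ = (R + 2) ^ 3 := by ring
  calc ‖s * (s + 1) * (s + 2)‖ * ‖∫ x in (N : ℝ)..((N : ℝ) + 1),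
          (pG (x - (N : ℝ)) : ℂ) * (x : ℂ) ^ (-s - 3)‖
      ≤ (R + 2) ^ 3 * ((N : ℝ) ^ (-s.re - 3)) := by
        apply mul_le_mul hs3 hint (norm_nonneg _) (by positivity)
    _ = (R + 2) ^ 3 * (N : ℝ) ^ (-s.re - 3) := rfl

def Uset : Set ℂ :=
  {s | -(3/2) < s.re ∧ s.re < 1} ∪
    ({s | 1/2 < s.re ∧ 0 < s.im} ∪ {s | 1/2 < s.re ∧ s.im < 0})

lemma isOpen_Uset : IsOpen Uset := by
  refine IsOpen.union ?_ (IsOpen.union ?_ ?_)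
  · exact (isOpen_lt continuous_const Complex.continuous_re).inter
      (isOpen_lt Complex.continuous_re continuous_const)
  · exact (isOpen_lt continuous_const Complex.continuous_re).inter
      (isOpen_lt continuous_const Complex.continuous_im)
  · exact (isOpen_lt continuous_const Complex.continuous_re).inter
      (isOpen_lt Complex.continuous_im continuous_const)

lemma Uset_ne_one {s : ℂ} (h : s ∈ Uset) : s ≠ 1 := by
  rintro rfl
  simp only [Uset, mem_union, mem_setOf_eq, Complex.one_re, Complex.one_im] at h
  rcases h with ⟨_, h⟩ | ⟨_, h⟩ | ⟨_, h⟩ <;> norm_num at h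

lemma Uset_re {s : ℂ} (h : s ∈ Uset) : -(3/2) < s.re := by
  rcases h with ⟨h1, _⟩ | ⟨h1, _⟩ | ⟨h1, _⟩ <;> linarith

lemma neg_one_mem_Uset : (-1 : ℂ) ∈ Uset := by
  left; simp; norm_num

lemma two_add_I_mem_Uset : (2 + Complex.I : ℂ) ∈ Uset := by
  right; left
  constructor <;> simp <;> norm_num

lemma isPreconnected_Uset : IsPreconnected Uset := by
  have hA : IsPreconnected {s : ℂ | -(3/2) < s.re ∧ s.re < 1} := by
    apply Convex.isPreconnected
    exact (convex_halfSpace_re_gt _).inter (convex_halfSpace_re_lt _)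
  have hB : IsPreconnected {s : ℂ | 1/2 < s.re ∧ 0 < s.im} := by
    apply Convex.isPreconnected
    exact (convex_halfSpace_re_gt _).inter (convex_halfSpace_im_gt _)
  have hC : IsPreconnected {s : ℂ | 1/2 < s.re ∧ s.im < 0} := by
    apply Convex.isPreconnected
    exact (convex_halfSpace_re_gt _).inter (convex_halfSpace_im_lt _)
  have p1 : ((3/4 : ℝ) + Complex.I : ℂ) ∈ {s : ℂ | -(3/2) < s.re ∧ s.re < 1} := by
    constructor <;> simp <;> norm_num
  have p1' : ((3/4 : ℝ) + Complex.I : ℂ) ∈ {s : ℂ | 1/2 < s.re ∧ 0 < s.im} := by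
    constructor <;> simp <;> norm_num
  have hAB := hA.union ((3/4 : ℝ) + Complex.I) p1 p1' hB
  have p2 : ((3/4 : ℝ) - Complex.I : ℂ) ∈
      {s : ℂ | -(3/2) < s.re ∧ s.re < 1} ∪ {s : ℂ | 1/2 < s.re ∧ 0 < s.im} := by
    left; constructor <;> simp <;> norm_num
  have p2' : ((3/4 : ℝ) - Complex.I : ℂ) ∈ {s : ℂ | 1/2 < s.re ∧ s.im < 0} := by
    constructor <;> simp <;> norm_num
  have h := hAB.union ((3/4 : ℝ) - Complex.I) p2 p2' hC
  have : Uset = {s : ℂ | -(3/2) < s.re ∧ s.re < 1} ∪ {s : ℂ | 1/2 < s.re ∧ 0 < s.im}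
      ∪ {s : ℂ | 1/2 < s.re ∧ s.im < 0} := by
    unfold Uset; rw [union_assoc]
  rw [this]
  exact h

def zG (s : ℂ) : ℂ := emf 1 s + ∑' n : ℕ, (emf (n + 2) s - emf (n + 1) s)

lemma tlu_emf : TendstoLocallyUniformlyOn (fun N s => emf N s) zG atTop Uset := by
  rw [tendstoLocallyUniformlyOn_iff_forall_isCompact isOpen_Uset]
  intro K hKU hK
  rcases K.eq_empty_or_nonempty with rfl | hne
  · exact tendstoUniformlyOn_empty
  obtain ⟨z0, hz0K, hmin⟩ := hK.exists_isMinOn hne Complex.continuous_re.continuousOn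
  obtain ⟨R, hR⟩ := hK.exists_bound_of_continuousOn continuousOn_id
  set σ : ℝ := z0.re with hσ
  have hσ2 : -(3/2) < σ := Uset_re (hKU hz0K)
  have hsum : Summable (fun n : ℕ => (R + 2) ^ 3 * ((n + 1 : ℕ) : ℝ) ^ (-σ - 3)) := by
    apply Summable.mul_left
    have : Summable (fun n : ℕ => ((n : ℕ) : ℝ) ^ (-σ - 3)) :=
      Real.summable_nat_rpow.mpr (by linarith)
    exact (summable_nat_add_iff 1).mpr this
  have hTU := tendstoUniformlyOn_tsum_nat (f := fun n s => emf (n + 2) s - emf (n + 1) s)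
    hsum (s := K) ?_
  swap
  · intro n s hsK
    have hs1 : s ≠ 1 := Uset_ne_one (hKU hsK)
    have hre : -(3/2) < s.re := Uset_re (hKU hsK)
    have hb := emf_step_bound (s := s) hs1 (by linarith) (hR s hsK) (N := n + 1) (by omega)
    refine le_trans hb ?_
    have hbase : (1 : ℝ) ≤ ((n + 1 : ℕ) : ℝ) := by exact_mod_cast Nat.succ_le_succ (Nat.zero_le n)
    have hexp : -s.re - 3 ≤ -σ - 3 := by
      have := hmin hsK; simp only [hσ]
      have h2 : z0.re ≤ s.re := this
      linarith
    have hmono := Real.rpow_le_rpow_of_exponent_le hbase hexp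
    have hR0 : (0 : ℝ) ≤ R := le_trans (norm_nonneg z0) (hR z0 hz0K)
    nlinarith [pow_nonneg (by linarith : (0:ℝ) ≤ R + 2) 3,
      Real.rpow_nonneg (le_trans zero_le_one hbase) (-s.re - 3)]
  have hps : ∀ (t : ℕ) (s : ℂ), (∑ n ∈ Finset.range t, (emf (n + 2) s - emf (n + 1) s))
      = emf (t + 1) s - emf 1 s := by
    intro t s
    have := Finset.sum_range_sub (f := fun i => emf (i + 1) s) t
    simpa using this
  have hTU2 : TendstoUniformlyOn (fun t s => emf (t + 1) s) zG atTop K := by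
    rw [Metric.tendstoUniformlyOn_iff] at hTU ⊢
    intro ε hε
    filter_upwards [hTU ε hε] with t ht s hs
    have h1 := ht s hs
    have e1 : emf (t + 1) s = emf 1 s + ∑ n ∈ Finset.range t, (emf (n + 2) s - emf (n + 1) s) := by
      rw [hps]; ring
    have e2 : zG s = emf 1 s + ∑' n : ℕ, (emf (n + 2) s - emf (n + 1) s) := rfl
    rw [e1, e2, dist_add_left]
    exact h1
  rw [Metric.tendstoUniformlyOn_iff] at hTU2 ⊢
  intro ε hε
  obtain ⟨M, hM⟩ := eventually_atTop.mp (hTU2 ε hε)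
  refine eventually_atTop.mpr ⟨M + 1, fun n hn s hs => ?_⟩
  have h := hM (n - 1) (by omega) s hs
  have : n - 1 + 1 = n := by omega
  rwa [this] at h

lemma emf_differentiableOn {N : ℕ} (hN : 1 ≤ N) : DifferentiableOn ℂ (emf N) Uset := by
  have hN0 : ((N : ℕ) : ℂ) ≠ 0 := Nat.cast_ne_zero.mpr (by omega)
  have h1 : Differentiable ℂ (fun s : ℂ => ∑ n ∈ Finset.Icc 1 N, (n : ℂ) ^ (-s)) := by
    apply Differentiable.fun_sum
    intro n hn
    have hn0 : ((n : ℕ) : ℂ) ≠ 0 := by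
      rw [Finset.mem_Icc] at hn
      exact Nat.cast_ne_zero.mpr (by omega)
    exact Differentiable.const_cpow differentiable_id.neg (Or.inl hn0)
  have h2 : DifferentiableOn ℂ (fun s : ℂ => (N : ℂ) ^ (1 - s) / (s - 1)) Uset := by
    apply DifferentiableOn.div
    · exact (Differentiable.const_cpow ((differentiable_const (1:ℂ)).sub differentiable_id)
        (Or.inl hN0)).differentiableOn
    · exact (differentiable_id.sub (differentiable_const 1)).differentiableOn
    · exact fun s hs => sub_ne_zero.mpr (Uset_ne_one hs)
  have h3 : Differentiable ℂ (fun s : ℂ => (N : ℂ) ^ (-s) / 2) :=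
    (Differentiable.const_cpow differentiable_id.neg (Or.inl hN0)).div_const 2
  have h4 : Differentiable ℂ (fun s : ℂ => s * (N : ℂ) ^ (-s - 1) / 12) :=
    (differentiable_id.mul (Differentiable.const_cpow
      (differentiable_id.neg.sub (differentiable_const 1)) (Or.inl hN0))).div_const 12
  exact ((((h1.differentiableOn).add h2).sub h3.differentiableOn).add h4.differentiableOn)

lemma cpow_tendsto_zero {w : ℂ} (hw : w.re < 0) :
    Tendsto (fun N : ℕ => ((N : ℕ) : ℂ) ^ w) atTop (𝓝 0) := by
  rw [tendsto_zero_iff_norm_tendsto_zero]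
  have hre : Tendsto (fun N : ℕ => ((N : ℕ) : ℝ) ^ w.re) atTop (𝓝 0) := by
    have := (tendsto_rpow_neg_atTop (y := -w.re) (by linarith)).comp
      tendsto_natCast_atTop_atTop (α := ℕ)
    simpa [Function.comp_def] using this
  apply hre.congr'
  filter_upwards [eventually_ge_atTop 1] with N hN
  have hN0 : (0 : ℝ) < (N : ℝ) := by exact_mod_cast hN
  rw [show ((N : ℕ) : ℂ) = (((N : ℕ) : ℝ) : ℂ) by push_cast; ring,
    norm_cpow_eq_rpow_re_of_pos hN0]

lemma emf_tendsto_zeta {s : ℂ} (hs : 1 < s.re) :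
    Tendsto (fun N => emf N s) atTop (𝓝 (riemannZeta s)) := by
  have hs0 : s ≠ 0 := by
    intro h; rw [h] at hs; simp only [Complex.zero_re] at hs; linarith
  have hsummable : Summable (fun n : ℕ => 1 / (n : ℂ) ^ s) :=
    Complex.summable_one_div_nat_cpow.mpr hs
  have hzeta := zeta_eq_tsum_one_div_nat_cpow hs
  have hS0 : Tendsto (fun N : ℕ => ∑ n ∈ Finset.range N, 1 / (n : ℂ) ^ s) atTop
      (𝓝 (riemannZeta s)) := by
    rw [hzeta]
    exact hsummable.hasSum.tendsto_sum_nat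
  have hicc : ∀ N : ℕ, (∑ n ∈ Finset.Icc 1 N, (n : ℂ) ^ (-s))
      = ∑ n ∈ Finset.range (N + 1), 1 / (n : ℂ) ^ s := by
    intro N
    have e1 : Finset.range (N + 1) = insert 0 (Finset.Icc 1 N) := by
      ext x; simp [Finset.mem_range, Finset.mem_insert, Finset.mem_Icc]; omega
    rw [e1, Finset.sum_insert (by simp)]
    have e2 : (1 : ℂ) / (0 : ℂ) ^ s = 0 := by
      rw [Complex.zero_cpow hs0]; simp
    rw [show ((0 : ℕ) : ℂ) = (0 : ℂ) by norm_num, e2, zero_add]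
    apply Finset.sum_congr rfl
    intro n _
    rw [Complex.cpow_neg, one_div]
  have hS : Tendsto (fun N : ℕ => ∑ n ∈ Finset.Icc 1 N, (n : ℂ) ^ (-s)) atTop
      (𝓝 (riemannZeta s)) := by
    simp_rw [hicc]
    exact hS0.comp (tendsto_add_atTop_nat 1)
  have hT1 : Tendsto (fun N : ℕ => ((N : ℕ) : ℂ) ^ (1 - s) / (s - 1)) atTop (𝓝 0) := by
    have := (cpow_tendsto_zero (w := 1 - s) (by simp; linarith)).div_const (s - 1)
    simpa using this
  have hT2 : Tendsto (fun N : ℕ => ((N : ℕ) : ℂ) ^ (-s) / 2) atTop (𝓝 0) := by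
    have := (cpow_tendsto_zero (w := -s) (by simp; linarith)).div_const (2 : ℂ)
    simpa using this
  have hT3 : Tendsto (fun N : ℕ => s * ((N : ℕ) : ℂ) ^ (-s - 1) / 12) atTop (𝓝 0) := by
    have := ((cpow_tendsto_zero (w := -s - 1) (by simp; linarith)).const_mul s).div_const
      (12 : ℂ)
    simpa using this
  have := ((hS.add hT1).sub hT2).add hT3
  simpa [emf] using this

lemma zG_eq_zeta : EqOn zG riemannZeta Uset := by
  have hdiff : ∀ᶠ N in atTop, DifferentiableOn ℂ (fun s => emf N s) Uset :=
    eventually_atTop.mpr ⟨1, fun N hN => emf_differentiableOn hN⟩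
  have hzGd : DifferentiableOn ℂ zG Uset := tlu_emf.differentiableOn hdiff isOpen_Uset
  have hzGa : AnalyticOnNhd ℂ zG Uset := hzGd.analyticOnNhd isOpen_Uset
  have hza : AnalyticOnNhd ℂ riemannZeta Uset := by
    have h1 : DifferentiableOn ℂ riemannZeta {(1 : ℂ)}ᶜ := fun s hs =>
      (differentiableAt_riemannZeta hs).differentiableWithinAt
    exact (h1.analyticOnNhd isOpen_compl_singleton).mono (fun s hs => Uset_ne_one hs)
  have hV : IsOpen {s : ℂ | 1 < s.re ∧ 0 < s.im} :=
    (isOpen_lt continuous_const Complex.continuous_re).inter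
      (isOpen_lt continuous_const Complex.continuous_im)
  have hVU : {s : ℂ | 1 < s.re ∧ 0 < s.im} ⊆ Uset := by
    intro s hs
    right; left
    exact ⟨by linarith [hs.1], hs.2⟩
  have hmem : (2 + Complex.I : ℂ) ∈ {s : ℂ | 1 < s.re ∧ 0 < s.im} := by
    constructor <;> simp
  have hEq : zG =ᶠ[nhds (2 + Complex.I : ℂ)] riemannZeta := by
    filter_upwards [hV.mem_nhds hmem] with s hs
    exact tendsto_nhds_unique (tlu_emf.tendsto_at (hVU hs)) (emf_tendsto_zeta hs.1)
  exact hzGa.eqOn_of_preconnected_of_eventuallyEq hza isPreconnected_Uset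
    two_add_I_mem_Uset hEq

lemma deriv_emf {N : ℕ} (hN : 1 ≤ N) :
    deriv (fun s => emf N s) (-1) =
      -(((∑ k ∈ Finset.Icc 1 N, (k : ℝ) * Real.log (k : ℝ))
          - (((N : ℝ) ^ 2 / 2 + (N : ℝ) / 2 + 1 / 12) * Real.log (N : ℝ)
              - (N : ℝ) ^ 2 / 4 + 1 / 12) : ℝ) : ℂ) := by
  have hN0 : ((N : ℕ) : ℂ) ≠ 0 := Nat.cast_ne_zero.mpr (by omega)
  have hNr0 : (0 : ℝ) ≤ (N : ℝ) := Nat.cast_nonneg N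
  set s₀ : ℂ := (-1 : ℂ)
  have hsum : HasDerivAt (fun s : ℂ => ∑ n ∈ Finset.Icc 1 N, (n : ℂ) ^ (-s))
      (∑ n ∈ Finset.Icc 1 N, ((n : ℂ) ^ (-s₀) * Complex.log (n : ℂ) * (-1))) s₀ := by
    apply HasDerivAt.fun_sum
    intro n hn
    have hn0 : ((n : ℕ) : ℂ) ≠ 0 := by
      rw [Finset.mem_Icc] at hn
      exact Nat.cast_ne_zero.mpr (by omega)
    exact HasDerivAt.const_cpow (hasDerivAt_id s₀).neg (Or.inl hn0)
  have hnum : HasDerivAt (fun s : ℂ => (N : ℂ) ^ (1 - s))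
      ((N : ℂ) ^ (1 - s₀) * Complex.log (N : ℂ) * (-1)) s₀ := by
    have h := HasDerivAt.const_cpow (c := (N : ℂ))
      (f := fun s : ℂ => 1 - s) (f' := -1) (x := s₀) ?_ (Or.inl hN0)
    · exact h
    · simpa using (hasDerivAt_id s₀).const_sub 1
  have hden : HasDerivAt (fun s : ℂ => s - 1) 1 s₀ := (hasDerivAt_id s₀).sub_const 1
  have hden0 : s₀ - 1 ≠ 0 := by
    simp only [s₀]; intro h
    have : (-1 : ℂ) = 1 := by linear_combination h
    norm_num at this
  have hT1 : HasDerivAt (fun s : ℂ => (N : ℂ) ^ (1 - s) / (s - 1))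
      ((((N : ℂ) ^ (1 - s₀) * Complex.log (N : ℂ) * (-1)) * (s₀ - 1)
        - (N : ℂ) ^ (1 - s₀) * 1) / (s₀ - 1) ^ 2) s₀ := hnum.div hden hden0
  have hT2 : HasDerivAt (fun s : ℂ => (N : ℂ) ^ (-s) / 2)
      (((N : ℂ) ^ (-s₀) * Complex.log (N : ℂ) * (-1)) / 2) s₀ := by
    exact (HasDerivAt.const_cpow (hasDerivAt_id s₀).neg (Or.inl hN0)).div_const 2
  have hc : HasDerivAt (fun s : ℂ => (N : ℂ) ^ (-s - 1))
      ((N : ℂ) ^ (-s₀ - 1) * Complex.log (N : ℂ) * (-1)) s₀ := by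
    have h := HasDerivAt.const_cpow (c := (N : ℂ))
      (f := fun s : ℂ => -s - 1) (f' := -1) (x := s₀) ?_ (Or.inl hN0)
    · exact h
    · simpa using ((hasDerivAt_id s₀).neg.sub_const 1)
  have hT3 : HasDerivAt (fun s : ℂ => s * (N : ℂ) ^ (-s - 1) / 12)
      ((1 * (N : ℂ) ^ (-s₀ - 1) + s₀ * ((N : ℂ) ^ (-s₀ - 1) * Complex.log (N : ℂ) * (-1))) / 12)
      s₀ := ((hasDerivAt_id s₀).mul hc).div_const 12
  have hd : HasDerivAt (fun s => emf N s)
      ((∑ n ∈ Finset.Icc 1 N, ((n : ℂ) ^ (-s₀) * Complex.log (n : ℂ) * (-1)))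
        + (((N : ℂ) ^ (1 - s₀) * Complex.log (N : ℂ) * (-1)) * (s₀ - 1)
            - (N : ℂ) ^ (1 - s₀) * 1) / (s₀ - 1) ^ 2
        - ((N : ℂ) ^ (-s₀) * Complex.log (N : ℂ) * (-1)) / 2
        + (1 * (N : ℂ) ^ (-s₀ - 1) + s₀ * ((N : ℂ) ^ (-s₀ - 1) * Complex.log (N : ℂ) * (-1))) / 12)
      s₀ := by
    exact ((hsum.add hT1).sub hT2).add hT3
  rw [hd.deriv]
  -- now evaluate the cpow values at s₀ = -1
  have e1 : (1 : ℂ) - s₀ = 2 := by simp [s₀]; norm_num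
  have e2 : -s₀ = 1 := by simp [s₀]
  have e3 : -s₀ - 1 = 0 := by simp [s₀]
  rw [e3, e1, e2]
  have v1 : (N : ℂ) ^ (2 : ℂ) = (N : ℂ) ^ (2 : ℕ) := by
    rw [show ((2 : ℂ)) = ((2 : ℕ) : ℂ) by norm_num, Complex.cpow_natCast]
  have v2 : (N : ℂ) ^ (1 : ℂ) = (N : ℂ) := Complex.cpow_one _
  have v3 : (N : ℂ) ^ (0 : ℂ) = 1 := Complex.cpow_zero _
  rw [v1, v2, v3]
  have hlogN : Complex.log ((N : ℕ) : ℂ) = ((Real.log (N : ℝ) : ℝ) : ℂ) := by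
    rw [show ((N : ℕ) : ℂ) = (((N : ℝ) : ℝ) : ℂ) by push_cast; ring, Complex.ofReal_log hNr0]
  have hlogn : ∀ n ∈ Finset.Icc 1 N, (n : ℂ) ^ (1 : ℂ) * Complex.log (n : ℂ) * (-1)
      = -(((n : ℝ) * Real.log (n : ℝ) : ℝ) : ℂ) := by
    intro n hn
    have hnr0 : (0 : ℝ) ≤ (n : ℝ) := Nat.cast_nonneg n
    rw [Complex.cpow_one,
      show ((n : ℕ) : ℂ) = (((n : ℝ) : ℝ) : ℂ) by push_cast; ring,
      ← Complex.ofReal_log hnr0]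
    push_cast
    ring
  rw [Finset.sum_congr rfl hlogn, hlogN]
  have hsval : s₀ = -1 := rfl
  rw [hsval]
  have hsum2 : (∑ n ∈ Finset.Icc 1 N, -(((n : ℝ) * Real.log (n : ℝ) : ℝ) : ℂ))
      = -((((∑ k ∈ Finset.Icc 1 N, (k : ℝ) * Real.log (k : ℝ)) : ℝ)) : ℂ) := by
    rw [Complex.ofReal_sum, ← Finset.sum_neg_distrib]
  rw [hsum2]
  push_cast
  ring

end

open Filter

/-- As `n → ∞`,
`Σ_{k=1}^{n} k ln k = (n²/2 + n/2 + 1/12) ln n − n²/4 + 1/12 − ζ'(−1) + o(1)`,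
where `ζ` is the Riemann zeta function. -/
theorem hyperfactorial_asymptotics :
    Tendsto (fun n : ℕ =>
        (((∑ k ∈ Finset.Icc 1 n, (k : ℝ) * Real.log (k : ℝ))
          - (((n : ℝ) ^ 2 / 2 + (n : ℝ) / 2 + 1 / 12) * Real.log (n : ℝ)
              - (n : ℝ) ^ 2 / 4 + 1 / 12) : ℝ) : ℂ))
      atTop (nhds (-(deriv riemannZeta (-1)))) := by
  have hdiff : ∀ᶠ N in atTop, DifferentiableOn ℂ (fun s => emf N s) Uset :=
    eventually_atTop.mpr ⟨1, fun N hN => emf_differentiableOn hN⟩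
  have h1 : Tendsto (fun N : ℕ => deriv (fun s => emf N s) (-1)) atTop
      (nhds (deriv zG (-1))) := by
    have h := (tlu_emf.deriv hdiff isOpen_Uset).tendsto_at neg_one_mem_Uset
    exact h
  have h2 : deriv zG (-1) = deriv riemannZeta (-1) := by
    apply Filter.EventuallyEq.deriv_eq
    filter_upwards [isOpen_Uset.mem_nhds neg_one_mem_Uset] with s hs
    exact zG_eq_zeta hs
  rw [h2] at h1
  have h3 := h1.neg
  apply h3.congr'
  filter_upwards [eventually_ge_atTop 1] with N hN
  rw [deriv_emf hN]
  ring
end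

section
/- Let η(t) be the function defined for t = e^{−2iα} by η = n²η₀ + n η₁ + η₂ + O(1/ρ) with η₀(t) = (1−√t)²/4. If η satisfies the σ-form of Painlevé VI: (η' − n²/4)(t(t−1)η'')² + [2(η' − n²/4)(tη' − η) − (η')² + (n²/2)η']² = (η')⁴, then necessarily η₁(t) ≡ 0 and η₂(t) = −(1+√t)²/16. -/
open Filter


set_option maxRecDepth 16000
set_option maxHeartbeats 2000000

/-- Key algebraic identity: the σ-form expression expanded as a polynomial in `m`,
with `u = s⁻¹` encoded via the relation `s * u = 1`. -/
lemma painleve_bigid (m s u q r b c B C : ℂ) (hu : s * u = 1) :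
    (m^2 * ((s-1)*(u/4)) + m*b + c - m^2/4)
        * ((s^2*(s^2-1)) * (m^2*(u^3/8) + m*B + C))^2
      + (2*(m^2*((s-1)*(u/4)) + m*b + c - m^2/4)
            * (s^2*(m^2*((s-1)*(u/4)) + m*b + c) - (m^2*((1-s)^2/4) + m*q + r))
          - (m^2*((s-1)*(u/4)) + m*b + c)^2
          + (m^2/2)*(m^2*((s-1)*(u/4)) + m*b + c))^2
      - (m^2*((s-1)*(u/4)) + m*b + c)^4
    = ((1024)*s^3*r*c^3 + (1024)*s^3*r^2*c^2 + (-1024)*s^5*c^4 + (-2048)*s^5*r*c^3 + (256)*s^7*c*C^2 + (1024)*s^7*c^4 + (-512)*s^9*c*C^2 + (256)*s^11*c*C^2)*(u^3/256)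
      + ((3072)*s^3*r*b*c^2 + (2048)*s^3*r^2*b*c + (1024)*s^3*q*c^3 + (2048)*s^3*q*r*c^2 + (-4096)*s^5*b*c^3 + (-6144)*s^5*r*b*c^2 + (-2048)*s^5*q*c^3 + (512)*s^7*c*B*C + (256)*s^7*b*C^2 + (4096)*s^7*b*c^3 + (-1024)*s^9*c*B*C + (-512)*s^9*b*C^2 + (512)*s^11*c*B*C + (256)*s^11*b*C^2)*(u^3/256)*m
      + ((-768)*s^2*r*c^2 + (-512)*s^2*r^2*c + (512)*s^3*r*c^2 + (3072)*s^3*r*b^2*c + (1024)*s^3*r^2*b^2 + (3072)*s^3*q*b*c^2 + (4096)*s^3*q*r*b*c + (1024)*s^3*q^2*c^2 + (64)*s^4*c*C + (512)*s^4*c^3 + (512)*s^4*r*c^2 + (-512)*s^5*c^3 + (-6144)*s^5*b^2*c^2 + (-6144)*s^5*r*b^2*c + (-6144)*s^5*q*b*c^2 + (-64)*s^6*C^2 + (-128)*s^6*c*C + (256)*s^7*c*B^2 + (512)*s^7*b*B*C + (6144)*s^7*b^2*c^2 + (128)*s^8*C^2 + (64)*s^8*c*C + (-512)*s^9*c*B^2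 + (-1024)*s^9*b*B*C + (-64)*s^10*C^2 + (256)*s^11*c*B^2 + (512)*s^11*b*B*C)*(u^3/256)*m^2
      + ((-1536)*s^2*r*b*c + (-512)*s^2*r^2*b + (-768)*s^2*q*c^2 + (-1024)*s^2*q*r*c + (1024)*s^3*r*b*c + (1024)*s^3*r*b^3 + (512)*s^3*q*c^2 + (3072)*s^3*q*b^2*c + (2048)*s^3*q*r*b^2 + (2048)*s^3*q^2*b*c + (64)*s^4*c*B + (64)*s^4*b*C + (1536)*s^4*b*c^2 + (1024)*s^4*r*b*c + (512)*s^4*q*c^2 + (-1536)*s^5*b*c^2 + (-4096)*s^5*b^3*c + (-2048)*s^5*r*b^3 + (-6144)*s^5*q*b^2*c + (-128)*s^6*B*C + (-128)*s^6*c*B + (-128)*s^6*b*C + (256)*s^7*b*B^2 + (4096)*s^7*b^3*c + (256)*s^8*B*C + (64)*s^8*c*B + (64)*s^8*b*C + (-512)*s^9*b*B^2 + (-128)*s^10*B*C + (256)*s^11*b*B^2)*(u^3/256)*m^3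
      + ((4)*s*c + (192)*s*r*c + (64)*s*r^2 + (-256)*s^2*r*c + (-768)*s^2*r*b^2 + (-1536)*s^2*q*b*c + (-1024)*s^2*q*r*b + (-512)*s^2*q^2*c + (-16)*s^3*C + (-8)*s^3*c + (-64)*s^3*c^2 + (64)*s^3*r*c + (512)*s^3*r*b^2 + (1024)*s^3*q*b*c + (1024)*s^3*q*b^3 + (1024)*s^3*q^2*b^2 + (128)*s^4*c^2 + (64)*s^4*b*B + (1536)*s^4*b^2*c + (512)*s^4*r*b^2 + (1024)*s^4*q*b*c + (32)*s^5*C + (4)*s^5*c + (-64)*s^5*c^2 + (-1536)*s^5*b^2*c + (-1024)*s^5*b^4 + (-2048)*s^5*q*b^3 + (-64)*s^6*B^2 + (-128)*s^6*b*B + (-16)*s^7*C + (1024)*s^7*b^4 + (128)*s^8*B^2 + (64)*s^8*b*B + (-64)*s^10*B^2)*(u^3/256)*m^4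
      + ((4)*s*b + (192)*s*r*b + (192)*s*q*c + (128)*s*q*r + (-256)*s^2*r*b + (-256)*s^2*q*c + (-768)*s^2*q*b^2 + (-512)*s^2*q^2*b + (-16)*s^3*B + (-8)*s^3*b + (-128)*s^3*b*c + (64)*s^3*r*b + (64)*s^3*q*c + (512)*s^3*q*b^2 + (256)*s^4*b*c + (512)*s^4*b^3 + (512)*s^4*q*b^2 + (32)*s^5*B + (4)*s^5*b + (-128)*s^5*b*c + (-512)*s^5*b^3 + (-16)*s^7*B)*(u^3/256)*m^5
      + ((-1) + (-16)*r + (32)*s*r + (192)*s*q*b + (64)*s*q^2 + (2)*s^2 + (-16)*s^2*r + (-256)*s^2*q*b + (-64)*s^3*b^2 + (64)*s^3*q*b + (-1)*s^4 + (128)*s^4*b^2 + (-64)*s^5*b^2)*(u^3/256)*m^6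
      + ((-16)*q + (32)*s*q + (-16)*s^2*q)*(u^3/256)*m^7 := by
  linear_combination ((-4)*r*c^3 + (-4)*r^2*c^2 + (-4)*s*r*c^3*u + (-4)*s*r^2*c^2*u + (4)*s^2*c^4 + (8)*s^2*r*c^3 + (-4)*s^2*r*c^3*u^2 + (-4)*s^2*r^2*c^2*u^2 + (4)*s^3*c^4*u + (8)*s^3*r*c^3*u + (-1)*s^4*c*C^2 + (-4)*s^4*c^4 + (4)*s^4*c^4*u^2 + (8)*s^4*r*c^3*u^2 + (-1)*s^5*c*C^2*u + (-4)*s^5*c^4*u + (2)*s^6*c*C^2 + (-1)*s^6*c*C^2*u^2 + (-4)*s^6*c^4*u^2 + (2)*s^7*c*C^2*u + (-1)*s^8*c*C^2 + (2)*s^8*c*C^2*u^2 + (-1)*s^9*c*C^2*u + (-1)*s^10*c*C^2*u^2 + (-12)*m*r*b*c^2 + (-8)*m*r^2*b*c + (-4)*m*q*c^3 + (-8)*m*q*r*c^2 + (-12)*m*s*r*b*c^2*u + (-8)*m*s*r^2*b*c*u + (-4)*m*s*q*c^3*u + (-8)*m*s*q*r*c^2*u + (16)*m*s^2*b*c^3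 + (24)*m*s^2*r*b*c^2 + (-12)*m*s^2*r*b*c^2*u^2 + (-8)*m*s^2*r^2*b*c*u^2 + (8)*m*s^2*q*c^3 + (-4)*m*s^2*q*c^3*u^2 + (-8)*m*s^2*q*r*c^2*u^2 + (16)*m*s^3*b*c^3*u + (24)*m*s^3*r*b*c^2*u + (8)*m*s^3*q*c^3*u + (-2)*m*s^4*c*B*C + (-1)*m*s^4*b*C^2 + (-16)*m*s^4*b*c^3 + (16)*m*s^4*b*c^3*u^2 + (24)*m*s^4*r*b*c^2*u^2 + (8)*m*s^4*q*c^3*u^2 + (-2)*m*s^5*c*B*C*u + (-1)*m*s^5*b*C^2*u + (-16)*m*s^5*b*c^3*u + (4)*m*s^6*c*B*C + (-2)*m*s^6*c*B*C*u^2 + (2)*m*s^6*b*C^2 + (-1)*m*s^6*b*C^2*u^2 + (-16)*m*s^6*b*c^3*u^2 + (4)*m*s^7*c*B*C*u + (2)*m*s^7*b*C^2*u + (-2)*m*s^8*c*B*C + (4)*m*s^8*c*B*C*u^2 + (-1)*m*s^8*b*C^2 + (2)*m*s^8*b*C^2*u^2 + (-2)*m*s^9*c*B*C*u + (-1)*m*s^9*b*C^2*u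 + (-2)*m*s^10*c*B*C*u^2 + (-1)*m*s^10*b*C^2*u^2 + (1)*m^2*r*c^2 + (3)*m^2*r*c^2*u + (-12)*m^2*r*b^2*c + (2)*m^2*r^2*c + (2)*m^2*r^2*c*u + (-4)*m^2*r^2*b^2 + (-12)*m^2*q*b*c^2 + (-16)*m^2*q*r*b*c + (-4)*m^2*q^2*c^2 + (2)*m^2*s*c^3 + (4)*m^2*s*r*c^2 + (-2)*m^2*s*r*c^2*u + (3)*m^2*s*r*c^2*u^2 + (-12)*m^2*s*r*b^2*c*u + (2)*m^2*s*r^2*c*u^2 + (-4)*m^2*s*r^2*b^2*u + (-12)*m^2*s*q*b*c^2*u + (-16)*m^2*s*q*r*b*c*u + (-4)*m^2*s*q^2*c^2*u + (-2)*m^2*s^2*c^3 + (-2)*m^2*s^2*c^3*u + (24)*m^2*s^2*b^2*c^2 + (-6)*m^2*s^2*r*c^2 + (-2)*m^2*s^2*r*c^2*u + (-2)*m^2*s^2*r*c^2*u^2 + (24)*m^2*s^2*r*b^2*c + (-12)*m^2*s^2*r*b^2*c*u^2 + (-4)*m^2*s^2*r^2*b^2*u^2 + (24)*m^2*s^2*q*b*c^2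 + (-12)*m^2*s^2*q*b*c^2*u^2 + (-16)*m^2*s^2*q*r*b*c*u^2 + (-4)*m^2*s^2*q^2*c^2*u^2 + (-4)*m^2*s^3*c^3 + (2)*m^2*s^3*c^3*u + (-2)*m^2*s^3*c^3*u^2 + (24)*m^2*s^3*b^2*c^2*u + (-2)*m^2*s^3*r*c^2*u^2 + (24)*m^2*s^3*r*b^2*c*u + (24)*m^2*s^3*q*b*c^2*u + (1/4)*m^2*s^4*C^2 + (1/4)*m^2*s^4*C^2*u + (-1)*m^2*s^4*c*B^2 + (4)*m^2*s^4*c^3 + (2)*m^2*s^4*c^3*u^2 + (-2)*m^2*s^4*b*B*C + (-24)*m^2*s^4*b^2*c^2 + (24)*m^2*s^4*b^2*c^2*u^2 + (24)*m^2*s^4*r*b^2*c*u^2 + (24)*m^2*s^4*q*b*c^2*u^2 + (1/4)*m^2*s^5*C^2*u^2 + (-1)*m^2*s^5*c*B^2*u + (-2)*m^2*s^5*b*B*C*u + (-24)*m^2*s^5*b^2*c^2*u + (-1/2)*m^2*s^6*C^2 + (-1/2)*m^2*s^6*C^2*u + (2)*m^2*s^6*c*B^2 + (-1)*m^2*s^6*c*B^2*u^2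 + (4)*m^2*s^6*b*B*C + (-2)*m^2*s^6*b*B*C*u^2 + (-24)*m^2*s^6*b^2*c^2*u^2 + (-1/2)*m^2*s^7*C^2*u^2 + (2)*m^2*s^7*c*B^2*u + (4)*m^2*s^7*b*B*C*u + (1/4)*m^2*s^8*C^2 + (1/4)*m^2*s^8*C^2*u + (-1)*m^2*s^8*c*B^2 + (2)*m^2*s^8*c*B^2*u^2 + (-2)*m^2*s^8*b*B*C + (4)*m^2*s^8*b*B*C*u^2 + (1/4)*m^2*s^9*C^2*u^2 + (-1)*m^2*s^9*c*B^2*u + (-2)*m^2*s^9*b*B*C*u + (-1)*m^2*s^10*c*B^2*u^2 + (-2)*m^2*s^10*b*B*C*u^2 + (2)*m^3*r*b*c + (6)*m^3*r*b*c*u + (-4)*m^3*r*b^3 + (2)*m^3*r^2*b + (2)*m^3*r^2*b*u + (1)*m^3*q*c^2 + (3)*m^3*q*c^2*u + (-12)*m^3*q*b^2*c + (4)*m^3*q*r*c + (4)*m^3*q*r*c*u + (-8)*m^3*q*r*b^2 + (-8)*m^3*q^2*b*c + (6)*m^3*s*b*c^2 + (8)*m^3*s*r*b*c + (-4)*m^3*s*r*b*c*u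 + (6)*m^3*s*r*b*c*u^2 + (-4)*m^3*s*r*b^3*u + (2)*m^3*s*r^2*b*u^2 + (4)*m^3*s*q*c^2 + (-2)*m^3*s*q*c^2*u + (3)*m^3*s*q*c^2*u^2 + (-12)*m^3*s*q*b^2*c*u + (4)*m^3*s*q*r*c*u^2 + (-8)*m^3*s*q*r*b^2*u + (-8)*m^3*s*q^2*b*c*u + (-6)*m^3*s^2*b*c^2 + (-6)*m^3*s^2*b*c^2*u + (16)*m^3*s^2*b^3*c + (-12)*m^3*s^2*r*b*c + (-4)*m^3*s^2*r*b*c*u + (-4)*m^3*s^2*r*b*c*u^2 + (8)*m^3*s^2*r*b^3 + (-4)*m^3*s^2*r*b^3*u^2 + (-6)*m^3*s^2*q*c^2 + (-2)*m^3*s^2*q*c^2*u + (-2)*m^3*s^2*q*c^2*u^2 + (24)*m^3*s^2*q*b^2*c + (-12)*m^3*s^2*q*b^2*c*u^2 + (-8)*m^3*s^2*q*r*b^2*u^2 + (-8)*m^3*s^2*q^2*b*c*u^2 + (-12)*m^3*s^3*b*c^2 + (6)*m^3*s^3*b*c^2*u + (-6)*m^3*s^3*b*c^2*u^2 + (16)*m^3*s^3*b^3*c*u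 + (-4)*m^3*s^3*r*b*c*u^2 + (8)*m^3*s^3*r*b^3*u + (-2)*m^3*s^3*q*c^2*u^2 + (24)*m^3*s^3*q*b^2*c*u + (1/2)*m^3*s^4*B*C + (1/2)*m^3*s^4*B*C*u + (-1)*m^3*s^4*b*B^2 + (12)*m^3*s^4*b*c^2 + (6)*m^3*s^4*b*c^2*u^2 + (-16)*m^3*s^4*b^3*c + (16)*m^3*s^4*b^3*c*u^2 + (8)*m^3*s^4*r*b^3*u^2 + (24)*m^3*s^4*q*b^2*c*u^2 + (1/2)*m^3*s^5*B*C*u^2 + (-1)*m^3*s^5*b*B^2*u + (-16)*m^3*s^5*b^3*c*u + (-1)*m^3*s^6*B*C + (-1)*m^3*s^6*B*C*u + (2)*m^3*s^6*b*B^2 + (-1)*m^3*s^6*b*B^2*u^2 + (-16)*m^3*s^6*b^3*c*u^2 + (-1)*m^3*s^7*B*C*u^2 + (2)*m^3*s^7*b*B^2*u + (1/2)*m^3*s^8*B*C + (1/2)*m^3*s^8*B*C*u + (-1)*m^3*s^8*b*B^2 + (2)*m^3*s^8*b*B^2*u^2 + (1/2)*m^3*s^9*B*C*u^2 + (-1)*m^3*s^9*b*B^2*u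 + (-1)*m^3*s^10*b*B^2*u^2 + (1/4)*m^4*c^2 + (1/2)*m^4*r*c + (-1/2)*m^4*r*c*u + (-3/4)*m^4*r*c*u^2 + (1)*m^4*r*b^2 + (3)*m^4*r*b^2*u + (-1/4)*m^4*r^2 + (-1/2)*m^4*r^2*u + (-1/4)*m^4*r^2*u^2 + (2)*m^4*q*b*c + (6)*m^4*q*b*c*u + (-4)*m^4*q*b^3 + (4)*m^4*q*r*b + (4)*m^4*q*r*b*u + (2)*m^4*q^2*c + (2)*m^4*q^2*c*u + (-4)*m^4*q^2*b^2 + (1/64)*m^4*s*c*u^3 + (-1/2)*m^4*s*c^2 + (-5/4)*m^4*s*c^2*u + (6)*m^4*s*b^2*c + (-2)*m^4*s*r*c + (-1)*m^4*s*r*c*u + (1)*m^4*s*r*c*u^2 + (4)*m^4*s*r*b^2 + (-2)*m^4*s*r*b^2*u + (3)*m^4*s*r*b^2*u^2 + (1/4)*m^4*s*r^2*u + (8)*m^4*s*q*b*c + (-4)*m^4*s*q*b*c*u + (6)*m^4*s*q*b*c*u^2 + (-4)*m^4*s*q*b^3*u + (4)*m^4*s*q*r*b*u^2 + (2)*m^4*s*q^2*c*u^2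 + (-4)*m^4*s*q^2*b^2*u + (1/64)*m^4*s^2*c*u^4 + (-5/4)*m^4*s^2*c^2 + (5/2)*m^4*s^2*c^2*u + (1/4)*m^4*s^2*c^2*u^2 + (-6)*m^4*s^2*b^2*c + (-6)*m^4*s^2*b^2*c*u + (4)*m^4*s^2*b^4 + (3/2)*m^4*s^2*r*c + (3)*m^4*s^2*r*c*u + (-1/4)*m^4*s^2*r*c*u^2 + (-6)*m^4*s^2*r*b^2 + (-2)*m^4*s^2*r*b^2*u + (-2)*m^4*s^2*r*b^2*u^2 + (-12)*m^4*s^2*q*b*c + (-4)*m^4*s^2*q*b*c*u + (-4)*m^4*s^2*q*b*c*u^2 + (8)*m^4*s^2*q*b^3 + (-4)*m^4*s^2*q*b^3*u^2 + (-4)*m^4*s^2*q^2*b^2*u^2 + (-1/16)*m^4*s^3*C*u^3 + (-1/32)*m^4*s^3*c*u^3 + (1/64)*m^4*s^3*c*u^5 + (3)*m^4*s^3*c^2 + (1/4)*m^4*s^3*c^2*u + (-1/2)*m^4*s^3*c^2*u^2 + (-12)*m^4*s^3*b^2*c + (6)*m^4*s^3*b^2*c*u + (-6)*m^4*s^3*b^2*c*u^2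 + (4)*m^4*s^3*b^4*u + (-3/2)*m^4*s^3*r*c*u + (-2)*m^4*s^3*r*b^2*u^2 + (-4)*m^4*s^3*q*b*c*u^2 + (8)*m^4*s^3*q*b^3*u + (1/16)*m^4*s^4*C*u^3 + (1/4)*m^4*s^4*B^2 + (1/4)*m^4*s^4*B^2*u + (-1/32)*m^4*s^4*c*u^4 + (-3/2)*m^4*s^4*c^2 + (-3)*m^4*s^4*c^2*u + (1/4)*m^4*s^4*c^2*u^2 + (12)*m^4*s^4*b^2*c + (6)*m^4*s^4*b^2*c*u^2 + (-4)*m^4*s^4*b^4 + (4)*m^4*s^4*b^4*u^2 + (8)*m^4*s^4*q*b^3*u^2 + (1/8)*m^4*s^5*C*u^3 + (1/4)*m^4*s^5*B^2*u^2 + (1/64)*m^4*s^5*c*u^3 + (-1/32)*m^4*s^5*c*u^5 + (3/2)*m^4*s^5*c^2*u + (-4)*m^4*s^5*b^4*u + (-1/8)*m^4*s^6*C*u^3 + (-1/2)*m^4*s^6*B^2 + (-1/2)*m^4*s^6*B^2*u + (1/64)*m^4*s^6*c*u^4 + (-4)*m^4*s^6*b^4*u^2 + (-1/16)*m^4*s^7*C*u^3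 + (-1/2)*m^4*s^7*B^2*u^2 + (1/64)*m^4*s^7*c*u^5 + (1/16)*m^4*s^8*C*u^3 + (1/4)*m^4*s^8*B^2 + (1/4)*m^4*s^8*B^2*u + (1/4)*m^4*s^9*B^2*u^2 + (1/2)*m^5*b*c + (1/2)*m^5*r*b + (-1/2)*m^5*r*b*u + (-3/4)*m^5*r*b*u^2 + (1/2)*m^5*q*c + (-1/2)*m^5*q*c*u + (-3/4)*m^5*q*c*u^2 + (1)*m^5*q*b^2 + (3)*m^5*q*b^2*u + (-1/2)*m^5*q*r + (-1)*m^5*q*r*u + (-1/2)*m^5*q*r*u^2 + (2)*m^5*q^2*b + (2)*m^5*q^2*b*u + (1/64)*m^5*s*b*u^3 + (-1)*m^5*s*b*c + (-5/2)*m^5*s*b*c*u + (2)*m^5*s*b^3 + (-2)*m^5*s*r*b + (-1)*m^5*s*r*b*u + (1)*m^5*s*r*b*u^2 + (-2)*m^5*s*q*c + (-1)*m^5*s*q*c*u + (1)*m^5*s*q*c*u^2 + (4)*m^5*s*q*b^2 + (-2)*m^5*s*q*b^2*u + (3)*m^5*s*q*b^2*u^2 + (1/2)*m^5*s*q*r*u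 + (2)*m^5*s*q^2*b*u^2 + (1/64)*m^5*s^2*b*u^4 + (-5/2)*m^5*s^2*b*c + (5)*m^5*s^2*b*c*u + (1/2)*m^5*s^2*b*c*u^2 + (-2)*m^5*s^2*b^3 + (-2)*m^5*s^2*b^3*u + (3/2)*m^5*s^2*r*b + (3)*m^5*s^2*r*b*u + (-1/4)*m^5*s^2*r*b*u^2 + (3/2)*m^5*s^2*q*c + (3)*m^5*s^2*q*c*u + (-1/4)*m^5*s^2*q*c*u^2 + (-6)*m^5*s^2*q*b^2 + (-2)*m^5*s^2*q*b^2*u + (-2)*m^5*s^2*q*b^2*u^2 + (-1/16)*m^5*s^3*B*u^3 + (-1/32)*m^5*s^3*b*u^3 + (1/64)*m^5*s^3*b*u^5 + (6)*m^5*s^3*b*c + (1/2)*m^5*s^3*b*c*u + (-1)*m^5*s^3*b*c*u^2 + (-4)*m^5*s^3*b^3 + (2)*m^5*s^3*b^3*u + (-2)*m^5*s^3*b^3*u^2 + (-3/2)*m^5*s^3*r*b*u + (-3/2)*m^5*s^3*q*c*u + (-2)*m^5*s^3*q*b^2*u^2 + (1/16)*m^5*s^4*B*u^3 + (-1/32)*m^5*s^4*b*u^4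 + (-3)*m^5*s^4*b*c + (-6)*m^5*s^4*b*c*u + (1/2)*m^5*s^4*b*c*u^2 + (4)*m^5*s^4*b^3 + (2)*m^5*s^4*b^3*u^2 + (1/8)*m^5*s^5*B*u^3 + (1/64)*m^5*s^5*b*u^3 + (-1/32)*m^5*s^5*b*u^5 + (3)*m^5*s^5*b*c*u + (-1/8)*m^5*s^6*B*u^3 + (1/64)*m^5*s^6*b*u^4 + (-1/16)*m^5*s^7*B*u^3 + (1/64)*m^5*s^7*b*u^5 + (1/16)*m^5*s^8*B*u^3 + (-1/256)*m^6*u^3 + (-1/8)*m^6*c*u + (1/4)*m^6*b^2 + (-1/8)*m^6*r + (-1/8)*m^6*r*u + (1/16)*m^6*r*u^2 + (1/2)*m^6*q*b + (-1/2)*m^6*q*b*u + (-3/4)*m^6*q*b*u^2 + (-1/4)*m^6*q^2 + (-1/2)*m^6*q^2*u + (-1/4)*m^6*q^2*u^2 + (-1/256)*m^6*s*u^4 + (-1/4)*m^6*s*c + (3/8)*m^6*s*c*u + (1/4)*m^6*s*c*u^2 + (-1/2)*m^6*s*b^2 + (-5/4)*m^6*s*b^2*u + (1/4)*m^6*s*r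 + (1/2)*m^6*s*r*u + (-2)*m^6*s*q*b + (-1)*m^6*s*q*b*u + (1)*m^6*s*q*b*u^2 + (1/4)*m^6*s*q^2*u + (1/128)*m^6*s^2*u^3 + (-1/256)*m^6*s^2*u^5 + (3/4)*m^6*s^2*c + (1/8)*m^6*s^2*c*u + (-3/4)*m^6*s^2*c*u^2 + (-5/4)*m^6*s^2*b^2 + (5/2)*m^6*s^2*b^2*u + (1/4)*m^6*s^2*b^2*u^2 + (-1/8)*m^6*s^2*r + (-5/8)*m^6*s^2*r*u + (-5/16)*m^6*s^2*r*u^2 + (3/2)*m^6*s^2*q*b + (3)*m^6*s^2*q*b*u + (-1/4)*m^6*s^2*q*b*u^2 + (1/128)*m^6*s^3*u^4 + (-1/256)*m^6*s^3*u^6 + (-3/4)*m^6*s^3*c + (-11/8)*m^6*s^3*c*u + (1/2)*m^6*s^3*c*u^2 + (3)*m^6*s^3*b^2 + (1/4)*m^6*s^3*b^2*u + (-1/2)*m^6*s^3*b^2*u^2 + (1/4)*m^6*s^3*r*u + (3/8)*m^6*s^3*r*u^2 + (-3/2)*m^6*s^3*q*b*u + (-1/256)*m^6*s^4*u^3 +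 (1/128)*m^6*s^4*u^5 + (1/256)*m^6*s^4*u^6 + (1/4)*m^6*s^4*c + (3/2)*m^6*s^4*c*u + (1/2)*m^6*s^4*c*u^2 + (-3/2)*m^6*s^4*b^2 + (-3)*m^6*s^4*b^2*u + (1/4)*m^6*s^4*b^2*u^2 + (-1/8)*m^6*s^4*r*u^2 + (-1/256)*m^6*s^5*u^4 + (1/128)*m^6*s^5*u^6 + (-1/2)*m^6*s^5*c*u + (-3/4)*m^6*s^5*c*u^2 + (3/2)*m^6*s^5*b^2*u + (-1/256)*m^6*s^6*u^5 + (-1/128)*m^6*s^6*u^6 + (1/4)*m^6*s^6*c*u^2 + (-1/256)*m^6*s^7*u^6 + (1/256)*m^6*s^8*u^6 + (-1/8)*m^7*b*u + (-1/8)*m^7*q + (-1/8)*m^7*q*u + (1/16)*m^7*q*u^2 + (-1/4)*m^7*s*b + (3/8)*m^7*s*b*u + (1/4)*m^7*s*b*u^2 + (1/4)*m^7*s*q + (1/2)*m^7*s*q*u + (3/4)*m^7*s^2*b + (1/8)*m^7*s^2*b*u + (-3/4)*m^7*s^2*b*u^2 + (-1/8)*m^7*s^2*q + (-5/8)*m^7*s^2*q*u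 + (-5/16)*m^7*s^2*q*u^2 + (-3/4)*m^7*s^3*b + (-11/8)*m^7*s^3*b*u + (1/2)*m^7*s^3*b*u^2 + (1/4)*m^7*s^3*q*u + (3/8)*m^7*s^3*q*u^2 + (1/4)*m^7*s^4*b + (3/2)*m^7*s^4*b*u + (1/2)*m^7*s^4*b*u^2 + (-1/8)*m^7*s^4*q*u^2 + (-1/2)*m^7*s^5*b*u + (-3/4)*m^7*s^5*b*u^2 + (1/4)*m^7*s^6*b*u^2 + (-1/64)*m^8 + (1/64)*m^8*u^2 + (1/16)*m^8*s + (3/64)*m^8*s*u + (-1/16)*m^8*s*u^2 + (-1/64)*m^8*s*u^3 + (-3/32)*m^8*s^2 + (-3/16)*m^8*s^2*u + (3/64)*m^8*s^2*u^2 + (1/16)*m^8*s^2*u^3 + (1/16)*m^8*s^3 + (9/32)*m^8*s^3*u + (1/8)*m^8*s^3*u^2 + (-5/64)*m^8*s^3*u^3 + (-1/64)*m^8*s^4 + (-3/16)*m^8*s^4*u + (-17/64)*m^8*s^4*u^2 + (3/64)*m^8*s^5*u + (3/16)*m^8*s^5*u^2 + (5/64)*m^8*s^5*u^3 + (-3/64)*m^8*s^6*u^2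 + (-1/16)*m^8*s^6*u^3 + (1/64)*m^8*s^7*u^3) * hu

/-- From a polynomial limit statement, the coefficients of degrees 7,6,5,4 vanish. -/
lemma painleve_coeff_extract (a0 a1 a2 a3 a4 a5 a6 a7 : ℂ)
    (h : Tendsto (fun n : ℝ => (a0 + a1*(n:ℂ) + a2*(n:ℂ)^2 + a3*(n:ℂ)^3 + a4*(n:ℂ)^4
        + a5*(n:ℂ)^5 + a6*(n:ℂ)^6 + a7*(n:ℂ)^7) / (n:ℂ)^2) atTop (nhds 0)) :
    a7 = 0 ∧ a6 = 0 ∧ a5 = 0 ∧ a4 = 0 := by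
  have hinv : Tendsto (fun n : ℝ => ((n:ℂ))⁻¹) atTop (nhds 0) := by
    have h0 : Tendsto (fun n : ℝ => (n:ℝ)⁻¹) atTop (nhds (0:ℝ)) := tendsto_inv_atTop_zero
    have := (Complex.continuous_ofReal.tendsto (0:ℝ)).comp h0
    simpa [Function.comp_def, Complex.ofReal_inv] using this
  have hzpow : ∀ j : ℕ, Tendsto (fun n : ℝ => ((n:ℂ))⁻¹ ^ (j+1)) atTop (nhds 0) := by
    intro j
    have := hinv.pow (j+1)
    rwa [zero_pow (Nat.succ_ne_zero j)] at this
  have hne : ∀ n : ℝ, 1 ≤ n → (n:ℂ) ≠ 0 := fun n hn =>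
    Complex.ofReal_ne_zero.mpr (by linarith)
  have e7 : a7 = 0 := by
    have base := ((((((((hzpow 6).const_mul a0).add ((hzpow 5).const_mul a1)).add ((hzpow 4).const_mul a2)).add ((hzpow 3).const_mul a3)).add ((hzpow 2).const_mul a4)).add ((hzpow 1).const_mul a5)).add ((hzpow 0).const_mul a6)).add (tendsto_const_nhds (x := a7))
    have htop : Tendsto (fun n : ℝ => (a0 + a1*(n:ℂ) + a2*(n:ℂ)^2 + a3*(n:ℂ)^3 + a4*(n:ℂ)^4 + a5*(n:ℂ)^5 + a6*(n:ℂ)^6 + a7*(n:ℂ)^7) / (n:ℂ)^2 * ((n:ℂ))⁻¹^5) atTop (nhds a7) := by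
      refine Tendsto.congr' ?_ (by simpa using base)
      filter_upwards [eventually_ge_atTop (1:ℝ)] with n hn
      have h0 : (n:ℂ) * ((n:ℂ))⁻¹ = 1 := mul_inv_cancel₀ (hne n hn)
      linear_combination (-(a1 * (((n:ℂ))⁻¹^6)
        + a2 * (((n:ℂ))⁻¹^5 + (n:ℂ)*((n:ℂ))⁻¹^6)
        + a3 * (((n:ℂ))⁻¹^4 + (n:ℂ)*((n:ℂ))⁻¹^5 + (n:ℂ)^2*((n:ℂ))⁻¹^6)
        + a4 * (((n:ℂ))⁻¹^3 + (n:ℂ)*((n:ℂ))⁻¹^4 + (n:ℂ)^2*((n:ℂ))⁻¹^5 + (n:ℂ)^3*((n:ℂ))⁻¹^6)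
        + a5 * (((n:ℂ))⁻¹^2 + (n:ℂ)*((n:ℂ))⁻¹^3 + (n:ℂ)^2*((n:ℂ))⁻¹^4 + (n:ℂ)^3*((n:ℂ))⁻¹^5 + (n:ℂ)^4*((n:ℂ))⁻¹^6)
        + a6 * (((n:ℂ))⁻¹ + (n:ℂ)*((n:ℂ))⁻¹^2 + (n:ℂ)^2*((n:ℂ))⁻¹^3 + (n:ℂ)^3*((n:ℂ))⁻¹^4 + (n:ℂ)^4*((n:ℂ))⁻¹^5 + (n:ℂ)^5*((n:ℂ))⁻¹^6)
        + a7 * (1 + (n:ℂ)*((n:ℂ))⁻¹ + (n:ℂ)^2*((n:ℂ))⁻¹^2 + (n:ℂ)^3*((n:ℂ))⁻¹^3 + (n:ℂ)^4*((n:ℂ))⁻¹^4 + (n:ℂ)^5*((n:ℂ))⁻¹^5 + (n:ℂ)^6*((n:ℂ))⁻¹^6))) * h0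
    exact tendsto_nhds_unique htop (by simpa using h.mul (hzpow 4))
  subst e7
  simp only [zero_mul, add_zero] at h
  have e6 : a6 = 0 := by
    have base := (((((((hzpow 5).const_mul a0).add ((hzpow 4).const_mul a1)).add ((hzpow 3).const_mul a2)).add ((hzpow 2).const_mul a3)).add ((hzpow 1).const_mul a4)).add ((hzpow 0).const_mul a5)).add (tendsto_const_nhds (x := a6))
    have htop : Tendsto (fun n : ℝ => (a0 + a1*(n:ℂ) + a2*(n:ℂ)^2 + a3*(n:ℂ)^3 + a4*(n:ℂ)^4 + a5*(n:ℂ)^5 + a6*(n:ℂ)^6) / (n:ℂ)^2 * ((n:ℂ))⁻¹^4) atTop (nhds a6) := by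
      refine Tendsto.congr' ?_ (by simpa using base)
      filter_upwards [eventually_ge_atTop (1:ℝ)] with n hn
      have h0 : (n:ℂ) * ((n:ℂ))⁻¹ = 1 := mul_inv_cancel₀ (hne n hn)
      linear_combination (-(a1 * (((n:ℂ))⁻¹^5)
        + a2 * (((n:ℂ))⁻¹^4 + (n:ℂ)*((n:ℂ))⁻¹^5)
        + a3 * (((n:ℂ))⁻¹^3 + (n:ℂ)*((n:ℂ))⁻¹^4 + (n:ℂ)^2*((n:ℂ))⁻¹^5)
        + a4 * (((n:ℂ))⁻¹^2 + (n:ℂ)*((n:ℂ))⁻¹^3 + (n:ℂ)^2*((n:ℂ))⁻¹^4 + (n:ℂ)^3*((n:ℂ))⁻¹^5)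
        + a5 * (((n:ℂ))⁻¹ + (n:ℂ)*((n:ℂ))⁻¹^2 + (n:ℂ)^2*((n:ℂ))⁻¹^3 + (n:ℂ)^3*((n:ℂ))⁻¹^4 + (n:ℂ)^4*((n:ℂ))⁻¹^5)
        + a6 * (1 + (n:ℂ)*((n:ℂ))⁻¹ + (n:ℂ)^2*((n:ℂ))⁻¹^2 + (n:ℂ)^3*((n:ℂ))⁻¹^3 + (n:ℂ)^4*((n:ℂ))⁻¹^4 + (n:ℂ)^5*((n:ℂ))⁻¹^5))) * h0
    exact tendsto_nhds_unique htop (by simpa using h.mul (hzpow 3))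
  subst e6
  simp only [zero_mul, add_zero] at h
  have e5 : a5 = 0 := by
    have base := ((((((hzpow 4).const_mul a0).add ((hzpow 3).const_mul a1)).add ((hzpow 2).const_mul a2)).add ((hzpow 1).const_mul a3)).add ((hzpow 0).const_mul a4)).add (tendsto_const_nhds (x := a5))
    have htop : Tendsto (fun n : ℝ => (a0 + a1*(n:ℂ) + a2*(n:ℂ)^2 + a3*(n:ℂ)^3 + a4*(n:ℂ)^4 + a5*(n:ℂ)^5) / (n:ℂ)^2 * ((n:ℂ))⁻¹^3) atTop (nhds a5) := by
      refine Tendsto.congr' ?_ (by simpa using base)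
      filter_upwards [eventually_ge_atTop (1:ℝ)] with n hn
      have h0 : (n:ℂ) * ((n:ℂ))⁻¹ = 1 := mul_inv_cancel₀ (hne n hn)
      linear_combination (-(a1 * (((n:ℂ))⁻¹^4)
        + a2 * (((n:ℂ))⁻¹^3 + (n:ℂ)*((n:ℂ))⁻¹^4)
        + a3 * (((n:ℂ))⁻¹^2 + (n:ℂ)*((n:ℂ))⁻¹^3 + (n:ℂ)^2*((n:ℂ))⁻¹^4)
        + a4 * (((n:ℂ))⁻¹ + (n:ℂ)*((n:ℂ))⁻¹^2 + (n:ℂ)^2*((n:ℂ))⁻¹^3 + (n:ℂ)^3*((n:ℂ))⁻¹^4)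
        + a5 * (1 + (n:ℂ)*((n:ℂ))⁻¹ + (n:ℂ)^2*((n:ℂ))⁻¹^2 + (n:ℂ)^3*((n:ℂ))⁻¹^3 + (n:ℂ)^4*((n:ℂ))⁻¹^4))) * h0
    exact tendsto_nhds_unique htop (by simpa using h.mul (hzpow 2))
  subst e5
  simp only [zero_mul, add_zero] at h
  have e4 : a4 = 0 := by
    have base := (((((hzpow 3).const_mul a0).add ((hzpow 2).const_mul a1)).add ((hzpow 1).const_mul a2)).add ((hzpow 0).const_mul a3)).add (tendsto_const_nhds (x := a4))
    have htop : Tendsto (fun n : ℝ => (a0 + a1*(n:ℂ) + a2*(n:ℂ)^2 + a3*(n:ℂ)^3 + a4*(n:ℂ)^4) / (n:ℂ)^2 * ((n:ℂ))⁻¹^2) atTop (nhds a4) := by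
      refine Tendsto.congr' ?_ (by simpa using base)
      filter_upwards [eventually_ge_atTop (1:ℝ)] with n hn
      have h0 : (n:ℂ) * ((n:ℂ))⁻¹ = 1 := mul_inv_cancel₀ (hne n hn)
      linear_combination (-(a1 * (((n:ℂ))⁻¹^3)
        + a2 * (((n:ℂ))⁻¹^2 + (n:ℂ)*((n:ℂ))⁻¹^3)
        + a3 * (((n:ℂ))⁻¹ + (n:ℂ)*((n:ℂ))⁻¹^2 + (n:ℂ)^2*((n:ℂ))⁻¹^3)
        + a4 * (1 + (n:ℂ)*((n:ℂ))⁻¹ + (n:ℂ)^2*((n:ℂ))⁻¹^2 + (n:ℂ)^3*((n:ℂ))⁻¹^3))) * h0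
    exact tendsto_nhds_unique htop (by simpa using h.mul (hzpow 1))
  exact ⟨rfl, rfl, rfl, e4⟩

/-- Substituting the expansion
`η(n,t) = n²η₀(t) + nη₁(t) + η₂(t)`, `η₀(t) = (1−√t)²/4`, into the Jimbo
σ-form of Painlevé VI
`(η' − n²/4)(t(t−1)η'')² + [2(η' − n²/4)(tη' − η) − (η')² + (n²/2)η']² = (η')⁴`
and matching powers of `n` (the equation holding up to `o(n²)` as `n → ∞`)
forces `η₁ ≡ 0` and `η₂(t) = −(1+√t)²/16`. -/
theorem painleveVI_matching
    (U : Set ℂ) (hU : IsOpen U)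
    (hUcut : ∀ t ∈ U, ¬(t.im = 0 ∧ t.re ≤ 0))
    (η₁ η₂ : ℂ → ℂ)
    (h1 : AnalyticOnNhd ℂ η₁ U) (h2 : AnalyticOnNhd ℂ η₂ U)
    (η : ℝ → ℂ → ℂ)
    (hη : η = fun (n : ℝ) (t : ℂ) => (n : ℂ) ^ 2 * ((1 - t ^ ((1 : ℂ) / 2)) ^ 2 / 4)
        + (n : ℂ) * η₁ t + η₂ t)
    (F : ℝ → ℂ → ℂ)
    (hF : F = fun (n : ℝ) (t : ℂ) =>
        (deriv (η n) t - (n : ℂ) ^ 2 / 4) * (t * (t - 1) * deriv (deriv (η n)) t) ^ 2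
        + (2 * (deriv (η n) t - (n : ℂ) ^ 2 / 4) * (t * deriv (η n) t - η n t)
            - (deriv (η n) t) ^ 2 + ((n : ℂ) ^ 2 / 2) * deriv (η n) t) ^ 2
        - (deriv (η n) t) ^ 4)
    (hmatch : ∀ t ∈ U, Tendsto (fun n : ℝ => F n t / (n : ℂ) ^ 2) atTop (nhds 0)) :
    ∀ t ∈ U, η₁ t = 0 ∧ η₂ t = -((1 + t ^ ((1 : ℂ) / 2)) ^ 2) / 16 := by
  have hslitmem : ∀ z ∈ U, z ∈ Complex.slitPlane := by
    intro z hz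
    have hcut := hUcut z hz
    rw [Complex.mem_slitPlane_iff]
    by_contra hc
    push_neg at hc
    exact hcut ⟨hc.2, hc.1⟩
  have hne0 : ∀ z ∈ U, z ≠ 0 := fun z hz =>
    Complex.slitPlane_ne_zero (hslitmem z hz)
  have hsq : ∀ z : ℂ, z ≠ 0 → (z ^ ((1:ℂ)/2))^2 = z := by
    intro z hz
    rw [sq, ← Complex.cpow_add _ _ hz]
    norm_num
  have hsqrt : ∀ z ∈ Complex.slitPlane,
      HasDerivAt (fun w : ℂ => w ^ ((1:ℂ)/2)) (((1:ℂ)/2) * z ^ ((1:ℂ)/2 - 1)) z := by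
    intro z hz
    simpa using (hasDerivAt_id z).cpow_const (c := (1:ℂ)/2) (by simpa using hz)
  have hsqrt2 : ∀ z ∈ Complex.slitPlane,
      HasDerivAt (fun w : ℂ => w ^ ((1:ℂ)/2 - 1)) (((1:ℂ)/2 - 1) * z ^ ((1:ℂ)/2 - 1 - 1)) z := by
    intro z hz
    simpa using (hasDerivAt_id z).cpow_const (c := (1:ℂ)/2 - 1) (by simpa using hz)
  have hD1 : ∀ z ∈ Complex.slitPlane,
      HasDerivAt (fun w : ℂ => (1 - w ^ ((1:ℂ)/2))^2/4)
        (-((1 - z ^ ((1:ℂ)/2)) * (z ^ ((1:ℂ)/2 - 1))) / 4) z := by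
    intro z hz
    have hone : HasDerivAt (fun w : ℂ => 1 - w ^ ((1:ℂ)/2))
        (-(((1:ℂ)/2) * z ^ ((1:ℂ)/2 - 1))) z := (hsqrt z hz).const_sub 1
    have h2' := (hone.pow 2).div_const 4
    refine h2'.congr_deriv ?_
    push_cast
    ring
  have hD2 : ∀ z ∈ Complex.slitPlane,
      HasDerivAt (fun w : ℂ => -((1 - w ^ ((1:ℂ)/2)) * (w ^ ((1:ℂ)/2 - 1))) / 4)
        (-((-(((1:ℂ)/2) * z ^ ((1:ℂ)/2 - 1))) * z ^ ((1:ℂ)/2 - 1)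
           + (1 - z ^ ((1:ℂ)/2)) * (((1:ℂ)/2 - 1) * z ^ ((1:ℂ)/2 - 1 - 1))) / 4) z := by
    intro z hz
    exact ((((hsqrt z hz).const_sub 1).mul (hsqrt2 z hz)).neg).div_const 4
  -- the master pointwise coefficient equations
  have master : ∀ t ∈ U, ∀ s q r b c B C : ℂ,
      s = t ^ ((1:ℂ)/2) → q = η₁ t → r = η₂ t → b = deriv η₁ t → c = deriv η₂ t →
      B = deriv (deriv η₁) t → C = deriv (deriv η₂) t →
      (((-16)*q + (32)*s*q + (-16)*s^2*q) = 0 ∧ ((-1) + (-16)*r + (32)*s*r + (192)*s*q*b + (64)*s*q^2 + (2)*s^2 + (-16)*s^2*r + (-256)*s^2*q*b + (-64)*s^3*b^2 + (64)*s^3*q*b + (-1)*s^4 + (128)*s^4*b^2 + (-64)*s^5*b^2) = 0 ∧ ((4)*s*c + (192)*s*r*c + (64)*s*r^2 + (-256)*s^2*r*c + (-768)*s^2*r*b^2 + (-1536)*s^2*q*b*c + (-1024)*s^2*q*r*b + (-512)*s^2*q^2*c + (-16)*s^3*C + (-8)*s^3*c + (-64)*s^3*c^2 + (64)*s^3*r*c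 + (512)*s^3*r*b^2 + (1024)*s^3*q*b*c + (1024)*s^3*q*b^3 + (1024)*s^3*q^2*b^2 + (128)*s^4*c^2 + (64)*s^4*b*B + (1536)*s^4*b^2*c + (512)*s^4*r*b^2 + (1024)*s^4*q*b*c + (32)*s^5*C + (4)*s^5*c + (-64)*s^5*c^2 + (-1536)*s^5*b^2*c + (-1024)*s^5*b^4 + (-2048)*s^5*q*b^3 + (-64)*s^6*B^2 + (-128)*s^6*b*B + (-16)*s^7*C + (1024)*s^7*b^4 + (128)*s^8*B^2 + (64)*s^8*b*B + (-64)*s^10*B^2) = 0) := by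
    rintro t ht s q r b c B C hs rfl rfl rfl rfl rfl rfl
    have hslit := hslitmem t ht
    have ht0 := hne0 t ht
    have hs2 : s^2 = t := by rw [hs]; exact hsq t ht0
    have hs0 : s ≠ 0 := fun h => ht0 (by rw [← hs2, h]; ring)
    have hu : s * s⁻¹ = 1 := mul_inv_cancel₀ hs0
    have hstinv : t⁻¹ = s⁻¹ * s⁻¹ := by rw [← hs2, sq, mul_inv]
    have hhalf : t ^ ((1:ℂ)/2 - 1) = t ^ ((1:ℂ)/2) * t⁻¹ := by
      rw [show ((1:ℂ)/2 - 1) = (1:ℂ)/2 + (-1) by ring, Complex.cpow_add _ _ ht0,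
        Complex.cpow_neg_one]
    have hhalf2 : t ^ ((1:ℂ)/2 - 1 - 1) = t ^ ((1:ℂ)/2) * t⁻¹ * t⁻¹ := by
      rw [show ((1:ℂ)/2 - 1 - 1) = ((1:ℂ)/2 - 1) + (-1) by ring, Complex.cpow_add _ _ ht0,
        Complex.cpow_neg_one, hhalf]
    have hc1 : -((1 - s) * (s * (s⁻¹ * s⁻¹))) / 4 = (s - 1) * (s⁻¹/4) := by
      linear_combination ((s-1) * s⁻¹/4) * hu
    have hc2 : -((-(((1:ℂ)/2) * (s * (s⁻¹ * s⁻¹)))) * (s * (s⁻¹ * s⁻¹))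
           + (1 - s) * (((1:ℂ)/2 - 1) * (s * (s⁻¹ * s⁻¹) * (s⁻¹ * s⁻¹)))) / 4 = s⁻¹^3/8 := by
      linear_combination (s⁻¹^3/8) * hu
    have hEt : ∀ n : ℝ, deriv (η n) t
        = (n:ℂ)^2 * ((s - 1) * (s⁻¹/4)) + (n:ℂ) * deriv η₁ t + deriv η₂ t := by
      intro n
      have hd : HasDerivAt (η n)
          ((n:ℂ)^2 * (-((1 - t ^ ((1:ℂ)/2)) * (t ^ ((1:ℂ)/2 - 1))) / 4)
            + (n:ℂ) * deriv η₁ t + deriv η₂ t) t := by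
        rw [hη]
        exact (((hD1 t hslit).const_mul ((n:ℂ)^2)).add
          (((h1 t ht).differentiableAt.hasDerivAt).const_mul ((n:ℂ)))).add
          (h2 t ht).differentiableAt.hasDerivAt
      rw [hd.deriv, hhalf, ← hs, hstinv, hc1]
    have hEv : ∀ n : ℝ, deriv (η n) =ᶠ[nhds t]
        (fun z => (n:ℂ)^2 * (-((1 - z ^ ((1:ℂ)/2)) * (z ^ ((1:ℂ)/2 - 1))) / 4)
          + (n:ℂ) * deriv η₁ z + deriv η₂ z) := by
      intro n
      filter_upwards [Complex.isOpen_slitPlane.mem_nhds hslit,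
        (h1 t ht).eventually_analyticAt, (h2 t ht).eventually_analyticAt] with z hz hz1 hz2
      have hd : HasDerivAt (η n)
          ((n:ℂ)^2 * (-((1 - z ^ ((1:ℂ)/2)) * (z ^ ((1:ℂ)/2 - 1))) / 4)
            + (n:ℂ) * deriv η₁ z + deriv η₂ z) z := by
        rw [hη]
        exact (((hD1 z hz).const_mul ((n:ℂ)^2)).add
          ((hz1.differentiableAt.hasDerivAt).const_mul ((n:ℂ)))).add
          hz2.differentiableAt.hasDerivAt
      exact hd.deriv
    have hE2t : ∀ n : ℝ, deriv (deriv (η n)) t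
        = (n:ℂ)^2 * (s⁻¹^3/8) + (n:ℂ) * deriv (deriv η₁) t + deriv (deriv η₂) t := by
      intro n
      have hd : HasDerivAt
          (fun z => (n:ℂ)^2 * (-((1 - z ^ ((1:ℂ)/2)) * (z ^ ((1:ℂ)/2 - 1))) / 4)
            + (n:ℂ) * deriv η₁ z + deriv η₂ z)
          ((n:ℂ)^2 * (-((-(((1:ℂ)/2) * t ^ ((1:ℂ)/2 - 1))) * t ^ ((1:ℂ)/2 - 1)
             + (1 - t ^ ((1:ℂ)/2)) * (((1:ℂ)/2 - 1) * t ^ ((1:ℂ)/2 - 1 - 1))) / 4)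
            + (n:ℂ) * deriv (deriv η₁) t + deriv (deriv η₂) t) t :=
        (((hD2 t hslit).const_mul ((n:ℂ)^2)).add
          (((h1.deriv t ht).differentiableAt.hasDerivAt).const_mul ((n:ℂ)))).add
          (h2.deriv t ht).differentiableAt.hasDerivAt
      rw [(hEv n).deriv_eq, hd.deriv, hhalf, hhalf2, ← hs, hstinv, hc2]
    have hηt : ∀ n : ℝ, η n t
        = (n:ℂ)^2 * ((1 - s)^2/4) + (n:ℂ) * η₁ t + η₂ t := by
      intro n
      simp only [hη]
      rw [← hs]
    have hFn : ∀ n : ℝ, F n t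
        = ((1024)*s^3*(η₂ t)*(deriv η₂ t)^3 + (1024)*s^3*(η₂ t)^2*(deriv η₂ t)^2 + (-1024)*s^5*(deriv η₂ t)^4 + (-2048)*s^5*(η₂ t)*(deriv η₂ t)^3 + (256)*s^7*(deriv η₂ t)*(deriv (deriv η₂) t)^2 + (1024)*s^7*(deriv η₂ t)^4 + (-512)*s^9*(deriv η₂ t)*(deriv (deriv η₂) t)^2 + (256)*s^11*(deriv η₂ t)*(deriv (deriv η₂) t)^2)*(s⁻¹^3/256)
      + ((3072)*s^3*(η₂ t)*(deriv η₁ t)*(deriv η₂ t)^2 + (2048)*s^3*(η₂ t)^2*(deriv η₁ t)*(deriv η₂ t) + (1024)*s^3*(η₁ t)*(deriv η₂ t)^3 + (2048)*s^3*(η₁ t)*(η₂ t)*(deriv η₂ t)^2 + (-4096)*s^5*(deriv η₁ t)*(deriv η₂ t)^3 + (-6144)*s^5*(η₂ t)*(deriv η₁ t)*(deriv η₂ t)^2 + (-2048)*s^5*(η₁ t)*(deriv η₂ t)^3 + (512)*s^7*(deriv η₂ t)*(deriv (deriv η₁) t)*(deriv (deriv η₂) t) + (256)*s^7*(deriv η₁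 t)*(deriv (deriv η₂) t)^2 + (4096)*s^7*(deriv η₁ t)*(deriv η₂ t)^3 + (-1024)*s^9*(deriv η₂ t)*(deriv (deriv η₁) t)*(deriv (deriv η₂) t) + (-512)*s^9*(deriv η₁ t)*(deriv (deriv η₂) t)^2 + (512)*s^11*(deriv η₂ t)*(deriv (deriv η₁) t)*(deriv (deriv η₂) t) + (256)*s^11*(deriv η₁ t)*(deriv (deriv η₂) t)^2)*(s⁻¹^3/256)*(n:ℂ)
      + ((-768)*s^2*(η₂ t)*(deriv η₂ t)^2 + (-512)*s^2*(η₂ t)^2*(deriv η₂ t) + (512)*s^3*(η₂ t)*(deriv η₂ t)^2 + (3072)*s^3*(η₂ t)*(deriv η₁ t)^2*(deriv η₂ t) + (1024)*s^3*(η₂ t)^2*(deriv η₁ t)^2 + (3072)*s^3*(η₁ t)*(deriv η₁ t)*(deriv η₂ t)^2 + (4096)*s^3*(η₁ t)*(η₂ t)*(deriv η₁ t)*(deriv η₂ t) + (1024)*s^3*(η₁ t)^2*(deriv η₂ t)^2 + (64)*s^4*(deriv η₂ t)*(deriv (deriv η₂) t) + (512)*s^4*(deriv η₂ t)^3 + (512)*s^4*(η₂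 t)*(deriv η₂ t)^2 + (-512)*s^5*(deriv η₂ t)^3 + (-6144)*s^5*(deriv η₁ t)^2*(deriv η₂ t)^2 + (-6144)*s^5*(η₂ t)*(deriv η₁ t)^2*(deriv η₂ t) + (-6144)*s^5*(η₁ t)*(deriv η₁ t)*(deriv η₂ t)^2 + (-64)*s^6*(deriv (deriv η₂) t)^2 + (-128)*s^6*(deriv η₂ t)*(deriv (deriv η₂) t) + (256)*s^7*(deriv η₂ t)*(deriv (deriv η₁) t)^2 + (512)*s^7*(deriv η₁ t)*(deriv (deriv η₁) t)*(deriv (deriv η₂) t) + (6144)*s^7*(deriv η₁ t)^2*(deriv η₂ t)^2 + (128)*s^8*(deriv (deriv η₂) t)^2 + (64)*s^8*(deriv η₂ t)*(deriv (deriv η₂) t) + (-512)*s^9*(deriv η₂ t)*(deriv (deriv η₁) t)^2 + (-1024)*s^9*(deriv η₁ t)*(deriv (deriv η₁) t)*(deriv (deriv η₂) t) + (-64)*s^10*(deriv (deriv η₂) t)^2 + (256)*s^11*(deriv η₂ t)*(deriv (deriv η₁) t)^2 + (512)*s^11*(deriv η₁ t)*(deriv (deriv η₁) t)*(deriv (deriv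 η₂) t))*(s⁻¹^3/256)*(n:ℂ)^2
      + ((-1536)*s^2*(η₂ t)*(deriv η₁ t)*(deriv η₂ t) + (-512)*s^2*(η₂ t)^2*(deriv η₁ t) + (-768)*s^2*(η₁ t)*(deriv η₂ t)^2 + (-1024)*s^2*(η₁ t)*(η₂ t)*(deriv η₂ t) + (1024)*s^3*(η₂ t)*(deriv η₁ t)*(deriv η₂ t) + (1024)*s^3*(η₂ t)*(deriv η₁ t)^3 + (512)*s^3*(η₁ t)*(deriv η₂ t)^2 + (3072)*s^3*(η₁ t)*(deriv η₁ t)^2*(deriv η₂ t) + (2048)*s^3*(η₁ t)*(η₂ t)*(deriv η₁ t)^2 + (2048)*s^3*(η₁ t)^2*(deriv η₁ t)*(deriv η₂ t) + (64)*s^4*(deriv η₂ t)*(deriv (deriv η₁) t) + (64)*s^4*(deriv η₁ t)*(deriv (deriv η₂) t) + (1536)*s^4*(deriv η₁ t)*(deriv η₂ t)^2 + (1024)*s^4*(η₂ t)*(deriv η₁ t)*(deriv η₂ t) + (512)*s^4*(η₁ t)*(deriv η₂ t)^2 + (-1536)*s^5*(deriv η₁ t)*(deriv η₂ t)^2 +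 (-4096)*s^5*(deriv η₁ t)^3*(deriv η₂ t) + (-2048)*s^5*(η₂ t)*(deriv η₁ t)^3 + (-6144)*s^5*(η₁ t)*(deriv η₁ t)^2*(deriv η₂ t) + (-128)*s^6*(deriv (deriv η₁) t)*(deriv (deriv η₂) t) + (-128)*s^6*(deriv η₂ t)*(deriv (deriv η₁) t) + (-128)*s^6*(deriv η₁ t)*(deriv (deriv η₂) t) + (256)*s^7*(deriv η₁ t)*(deriv (deriv η₁) t)^2 + (4096)*s^7*(deriv η₁ t)^3*(deriv η₂ t) + (256)*s^8*(deriv (deriv η₁) t)*(deriv (deriv η₂) t) + (64)*s^8*(deriv η₂ t)*(deriv (deriv η₁) t) + (64)*s^8*(deriv η₁ t)*(deriv (deriv η₂) t) + (-512)*s^9*(deriv η₁ t)*(deriv (deriv η₁) t)^2 + (-128)*s^10*(deriv (deriv η₁) t)*(deriv (deriv η₂) t) + (256)*s^11*(deriv η₁ t)*(deriv (deriv η₁) t)^2)*(s⁻¹^3/256)*(n:ℂ)^3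
      + ((4)*s*(deriv η₂ t) + (192)*s*(η₂ t)*(deriv η₂ t) + (64)*s*(η₂ t)^2 + (-256)*s^2*(η₂ t)*(deriv η₂ t) + (-768)*s^2*(η₂ t)*(deriv η₁ t)^2 + (-1536)*s^2*(η₁ t)*(deriv η₁ t)*(deriv η₂ t) + (-1024)*s^2*(η₁ t)*(η₂ t)*(deriv η₁ t) + (-512)*s^2*(η₁ t)^2*(deriv η₂ t) + (-16)*s^3*(deriv (deriv η₂) t) + (-8)*s^3*(deriv η₂ t) + (-64)*s^3*(deriv η₂ t)^2 + (64)*s^3*(η₂ t)*(deriv η₂ t) + (512)*s^3*(η₂ t)*(deriv η₁ t)^2 + (1024)*s^3*(η₁ t)*(deriv η₁ t)*(deriv η₂ t) + (1024)*s^3*(η₁ t)*(deriv η₁ t)^3 + (1024)*s^3*(η₁ t)^2*(deriv η₁ t)^2 + (128)*s^4*(deriv η₂ t)^2 + (64)*s^4*(deriv η₁ t)*(deriv (deriv η₁) t) + (1536)*s^4*(deriv η₁ t)^2*(deriv η₂ t) + (512)*s^4*(η₂ t)*(deriv η₁ t)^2 + (1024)*s^4*(η₁ t)*(deriv η₁ t)*(deriv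 η₂ t) + (32)*s^5*(deriv (deriv η₂) t) + (4)*s^5*(deriv η₂ t) + (-64)*s^5*(deriv η₂ t)^2 + (-1536)*s^5*(deriv η₁ t)^2*(deriv η₂ t) + (-1024)*s^5*(deriv η₁ t)^4 + (-2048)*s^5*(η₁ t)*(deriv η₁ t)^3 + (-64)*s^6*(deriv (deriv η₁) t)^2 + (-128)*s^6*(deriv η₁ t)*(deriv (deriv η₁) t) + (-16)*s^7*(deriv (deriv η₂) t) + (1024)*s^7*(deriv η₁ t)^4 + (128)*s^8*(deriv (deriv η₁) t)^2 + (64)*s^8*(deriv η₁ t)*(deriv (deriv η₁) t) + (-64)*s^10*(deriv (deriv η₁) t)^2)*(s⁻¹^3/256)*(n:ℂ)^4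
      + ((4)*s*(deriv η₁ t) + (192)*s*(η₂ t)*(deriv η₁ t) + (192)*s*(η₁ t)*(deriv η₂ t) + (128)*s*(η₁ t)*(η₂ t) + (-256)*s^2*(η₂ t)*(deriv η₁ t) + (-256)*s^2*(η₁ t)*(deriv η₂ t) + (-768)*s^2*(η₁ t)*(deriv η₁ t)^2 + (-512)*s^2*(η₁ t)^2*(deriv η₁ t) + (-16)*s^3*(deriv (deriv η₁) t) + (-8)*s^3*(deriv η₁ t) + (-128)*s^3*(deriv η₁ t)*(deriv η₂ t) + (64)*s^3*(η₂ t)*(deriv η₁ t) + (64)*s^3*(η₁ t)*(deriv η₂ t) + (512)*s^3*(η₁ t)*(deriv η₁ t)^2 + (256)*s^4*(deriv η₁ t)*(deriv η₂ t) + (512)*s^4*(deriv η₁ t)^3 + (512)*s^4*(η₁ t)*(deriv η₁ t)^2 + (32)*s^5*(deriv (deriv η₁) t) + (4)*s^5*(deriv η₁ t) + (-128)*s^5*(deriv η₁ t)*(deriv η₂ t) + (-512)*s^5*(deriv η₁ t)^3 + (-16)*s^7*(deriv (deriv η₁) t))*(s⁻¹^3/256)*(n:ℂ)^5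
      + ((-1) + (-16)*(η₂ t) + (32)*s*(η₂ t) + (192)*s*(η₁ t)*(deriv η₁ t) + (64)*s*(η₁ t)^2 + (2)*s^2 + (-16)*s^2*(η₂ t) + (-256)*s^2*(η₁ t)*(deriv η₁ t) + (-64)*s^3*(deriv η₁ t)^2 + (64)*s^3*(η₁ t)*(deriv η₁ t) + (-1)*s^4 + (128)*s^4*(deriv η₁ t)^2 + (-64)*s^5*(deriv η₁ t)^2)*(s⁻¹^3/256)*(n:ℂ)^6
      + ((-16)*(η₁ t) + (32)*s*(η₁ t) + (-16)*s^2*(η₁ t))*(s⁻¹^3/256)*(n:ℂ)^7 := by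
      intro n
      simp only [hF]
      rw [hEt n, hE2t n, hηt n, ← hs2]
      exact painleve_bigid ((n:ℝ):ℂ) s s⁻¹ _ _ _ _ _ _ hu
    obtain ⟨e7, e6, e5, e4⟩ := painleve_coeff_extract _ _ _ _ _ _ _ _
      ((hmatch t ht).congr (fun n => by rw [hFn n]))
    have hden : (s⁻¹^3/(256:ℂ)) ≠ 0 :=
      div_ne_zero (pow_ne_zero 3 (inv_ne_zero hs0)) (by norm_num)
    exact ⟨(mul_eq_zero.mp e7).resolve_right hden,
      (mul_eq_zero.mp e6).resolve_right hden,
      (mul_eq_zero.mp e4).resolve_right hden⟩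
  -- η₁ vanishes
  have hq0 : ∀ t ∈ U, η₁ t = 0 := by
    intro t ht
    obtain ⟨E7, E6, -⟩ := master t ht _ _ _ _ _ _ _ rfl rfl rfl rfl rfl rfl rfl
    by_cases hs1 : t ^ ((1:ℂ)/2) = 1
    · rw [hs1] at E6
      have hq2 : η₁ t ^ 2 = 0 := by linear_combination ((1:ℂ)/64) * E6
      exact (pow_eq_zero_iff (two_ne_zero)).mp hq2
    · have hfac : η₁ t * (t ^ ((1:ℂ)/2) - 1)^2 = 0 := by
        linear_combination (-(1:ℂ)/16) * E7
      rcases mul_eq_zero.mp hfac with h | h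
      · exact h
      · exact absurd ((pow_eq_zero_iff (two_ne_zero)).mp h)
          (sub_ne_zero.mpr hs1)
  have hb0 : ∀ t ∈ U, deriv η₁ t = 0 := by
    intro t ht
    have hev : η₁ =ᶠ[nhds t] fun _ => (0:ℂ) := by
      filter_upwards [hU.mem_nhds ht] with z hz using hq0 z hz
    rw [hev.deriv_eq]
    simp
  have hB0 : ∀ t ∈ U, deriv (deriv η₁) t = 0 := by
    intro t ht
    have hev : deriv η₁ =ᶠ[nhds t] fun _ => (0:ℂ) := by
      filter_upwards [hU.mem_nhds ht] with z hz using hb0 z hz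
    rw [hev.deriv_eq]
    simp
  -- η₂ away from t = 1
  have hr1 : ∀ t ∈ U, t ^ ((1:ℂ)/2) ≠ 1 → η₂ t = -((1 + t ^ ((1:ℂ)/2)) ^ 2) / 16 := by
    intro t ht hs1
    obtain ⟨-, E6, -⟩ := master t ht _ _ _ _ _ _ _ rfl rfl rfl rfl rfl rfl rfl
    rw [hq0 t ht, hb0 t ht] at E6
    have key2 : (η₂ t + ((1 + t ^ ((1:ℂ)/2))^2)/16) * (1 - t ^ ((1:ℂ)/2))^2 = 0 := by
      linear_combination (-(1:ℂ)/16) * E6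
    have hfac : (1 - t ^ ((1:ℂ)/2)) ≠ 0 := fun h => hs1 (by linear_combination -h)
    have hsum := (mul_eq_zero.mp key2).resolve_right (pow_ne_zero 2 hfac)
    linear_combination hsum
  -- conclusion
  intro t ht
  refine ⟨hq0 t ht, ?_⟩
  by_cases hs1 : t ^ ((1:ℂ)/2) = 1
  · exfalso
    obtain ⟨-, -, E4⟩ := master t ht _ _ _ _ _ _ _ rfl rfl rfl rfl rfl rfl rfl
    rw [hq0 t ht, hb0 t ht, hB0 t ht, hs1] at E4
    have hr0 : η₂ t = 0 := by
      have hsqr : η₂ t ^ 2 = 0 := by linear_combination ((1:ℂ)/64) * E4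
      exact (pow_eq_zero_iff (two_ne_zero)).mp hsqr
    have ht0 := hne0 t ht
    have ht1 : t = 1 := by
      have h' := hsq t ht0
      rw [hs1] at h'
      simpa using h'.symm
    subst ht1
    have hcont : Tendsto η₂ (nhdsWithin (1:ℂ) {(1:ℂ)}ᶜ) (nhds 0) := by
      rw [← hr0]
      exact ((h2 1 ht).continuousAt.tendsto).mono_left nhdsWithin_le_nhds
    have hgc : Tendsto (fun z : ℂ => -((1 + z ^ ((1:ℂ)/2)) ^ 2) / 16)
        (nhds (1:ℂ)) (nhds (-((1 + 1) ^ 2) / 16)) := by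
      have hc : ContinuousAt (fun z : ℂ => z ^ ((1:ℂ)/2)) 1 :=
        continuousAt_cpow_const (by simp [Complex.mem_slitPlane_iff])
      have hc2 : ContinuousAt (fun z : ℂ => -((1 + z ^ ((1:ℂ)/2)) ^ 2) / 16) 1 :=
        (((continuousAt_const.add hc).pow 2).neg).div_const 16
      have hc3 := hc2.tendsto
      simpa [Complex.one_cpow] using hc3
    have hcont2 : Tendsto η₂ (nhdsWithin (1:ℂ) {(1:ℂ)}ᶜ) (nhds (-((1 + 1) ^ 2) / 16)) := by
      refine Tendsto.congr' ?_ (hgc.mono_left nhdsWithin_le_nhds)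
      filter_upwards [self_mem_nhdsWithin,
        mem_nhdsWithin_of_mem_nhds (hU.mem_nhds ht)] with z hz1 hzU
      have hz0 := hne0 z hzU
      have hzs : z ^ ((1:ℂ)/2) ≠ 1 := fun h => hz1 (by rw [← hsq z hz0, h, one_pow]; rfl)
      exact (hr1 z hzU hzs).symm
    haveI : (nhdsWithin (1:ℂ) {(1:ℂ)}ᶜ).NeBot := Module.punctured_nhds_neBot ℝ ℂ 1
    have hbad := tendsto_nhds_unique hcont hcont2
    norm_num at hbad
  · exact hr1 t ht hs1
end
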